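/- If (X₁,Y₁) is independent of (X₂,Y₂), then the tension region tensorizes: 𝔗(X₁X₂; Y₁Y₂) = 𝔗(X₁;Y₁) + 𝔗(X₂;Y₂), where + denotes Minkowski sum. -/

import Mathlib

namespace Paper

open Classical in
/-- Probability of an event under a pmf `μ` on a finite sample space. -/
noncomputable def pe {Ω : Type*} [Fintype Ω] (μ : Ω → ℝ) (E : Ω → Prop) : ℝ :=
  ∑ ω, if E ω then μ ω else 0

/-- Probability that random variable `X` takes value `a`. -/
noncomputable def prob {Ω α : Type*} [Fintype Ω] (μ : Ω → ℝ) (X : Ω → α) (a : α) : ℝ :=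
  pe μ (fun ω => X ω = a)

/-- `μ` is a probability mass function. -/
def IsPMF {Ω : Type*} [Fintype Ω] (μ : Ω → ℝ) : Prop :=
  (∀ ω, 0 ≤ μ ω) ∧ ∑ ω, μ ω = 1

open Classical in
/-- Shannon entropy (in bits) of the random variable `X` under `μ`. -/
noncomputable def H {Ω α : Type*} [Fintype Ω] (μ : Ω → ℝ) (X : Ω → α) : ℝ :=
  -∑ a ∈ Finset.univ.image X, prob μ X a * Real.logb 2 (prob μ X a)

/-- Mutual information `I(X;Y)` in bits. -/
noncomputable def mutInfo {Ω α β : Type*} [Fintype Ω] (μ : Ω → ℝ)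
    (X : Ω → α) (Y : Ω → β) : ℝ :=
  H μ X + H μ Y - H μ (fun ω => (X ω, Y ω))

/-- Conditional entropy `H(X|Y)` in bits. -/
noncomputable def condEnt {Ω α β : Type*} [Fintype Ω] (μ : Ω → ℝ)
    (X : Ω → α) (Y : Ω → β) : ℝ :=
  H μ (fun ω => (X ω, Y ω)) - H μ Y

/-- Conditional mutual information `I(X;Y|Z)` in bits. -/
noncomputable def condMutInfo {Ω α β γ : Type*} [Fintype Ω] (μ : Ω → ℝ)
    (X : Ω → α) (Y : Ω → β) (Z : Ω → γ) : ℝ :=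
  H μ (fun ω => (X ω, Z ω)) + H μ (fun ω => (Y ω, Z ω))
    - H μ (fun ω => (X ω, Y ω, Z ω)) - H μ Z

end Paper
namespace Paper

/-- The tension region `𝔗(X;Y) ⊆ ℝ₊³`: the set of `(r₁,r₂,r₃)` such that some
`Q` (on a finite alphabet, wlog `Fin n`) jointly distributed with `(X,Y)`
satisfies `I(Y;Q|X) ≤ r₁`, `I(X;Q|Y) ≤ r₂`, `I(X;Y|Q) ≤ r₃`. -/
def Rtens {𝒳 𝒴 : Type} [Fintype 𝒳] [Fintype 𝒴] (μ : 𝒳 × 𝒴 → ℝ) :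
    Set (ℝ × ℝ × ℝ) :=
  {r | 0 ≤ r.1 ∧ 0 ≤ r.2.1 ∧ 0 ≤ r.2.2 ∧
    ∃ (n : ℕ) (ν : 𝒳 × 𝒴 × Fin n → ℝ), IsPMF ν ∧
      (∀ a b, (∑ q, ν (a, b, q)) = μ (a, b)) ∧
      condMutInfo ν (fun w => w.2.1) (fun w => w.2.2) (fun w => w.1) ≤ r.1 ∧
      condMutInfo ν (fun w => w.1) (fun w => w.2.2) (fun w => w.2.1) ≤ r.2.1 ∧
      condMutInfo ν (fun w => w.1) (fun w => w.2.1) (fun w => w.2.2) ≤ r.2.2}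

end Paper


namespace Paper
set_option linter.unusedSectionVars false
set_option maxHeartbeats 1000000

section Core
variable {Ω Ω' α β γ : Type*} [Fintype Ω] [Fintype Ω']

open Classical in
lemma prob_def (μ : Ω → ℝ) (X : Ω → α) (a : α) :
    prob μ X a = ∑ ω, if X ω = a then μ ω else 0 := by
  simp [prob, pe]

lemma prob_nonneg {μ : Ω → ℝ} (hμ : ∀ ω, 0 ≤ μ ω) (X : Ω → α) (a : α) :
    0 ≤ prob μ X a := by
  classical
  rw [prob_def]
  refine Finset.sum_nonneg fun ω _ => ?_
  split
  · exact hμ ω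
  · exact le_rfl

lemma prob_eq_zero' {μ : Ω → ℝ} {X : Ω → α} {a : α}
    (h : ∀ ω, X ω ≠ a) : prob μ X a = 0 := by
  classical
  rw [prob_def]
  exact Finset.sum_eq_zero fun ω _ => by simp [h ω]

lemma H_superset (μ : Ω → ℝ) (X : Ω → α) {S : Finset α}
    (hS : ∀ ω, X ω ∈ S) :
    H μ X = -∑ a ∈ S, prob μ X a * Real.logb 2 (prob μ X a) := by
  classical
  unfold H
  congr 1
  refine Finset.sum_subset (fun a ha => ?_) (fun a _ ha => ?_)
  · rcases Finset.mem_image.1 ha with ⟨ω, _, rfl⟩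
    exact hS ω
  · have : prob μ X a = 0 := by
      refine prob_eq_zero' fun ω hω => ha ?_
      exact Finset.mem_image.2 ⟨ω, Finset.mem_univ _, hω⟩
    rw [this]
    simp

lemma sum_prob_superset (μ : Ω → ℝ) (X : Ω → α) {S : Finset α}
    (hS : ∀ ω, X ω ∈ S) :
    ∑ a ∈ S, prob μ X a = ∑ ω, μ ω := by
  classical
  simp only [prob_def]
  rw [Finset.sum_comm]
  refine Finset.sum_congr rfl fun ω _ => ?_
  rw [Finset.sum_ite_eq S (X ω) (fun _ => μ ω)]
  simp [hS ω]

lemma prob_comp_inj {g : α → β} (hg : Function.Injective g) (μ : Ω → ℝ) (X : Ω → α) (a : α) :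
    prob μ (fun ω => g (X ω)) (g a) = prob μ X a := by
  classical
  simp only [prob_def]
  exact Finset.sum_congr rfl fun ω _ => by simp [hg.eq_iff]

lemma prob_comp_le {μ : Ω → ℝ} (hμ : ∀ ω, 0 ≤ μ ω) (X : Ω → α) (g : α → β) (a : α) :
    prob μ X a ≤ prob μ (fun ω => g (X ω)) (g a) := by
  classical
  simp only [prob_def]
  refine Finset.sum_le_sum fun ω _ => ?_
  by_cases h : X ω = a
  · simp [h]
  · simp only [h, if_false]
    split
    · exact hμ ω
    · exact le_rfl

lemma H_comp_inj {g : α → β} (hg : Function.Injective g) (μ : Ω → ℝ) (X : Ω → α) :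
    H μ (fun ω => g (X ω)) = H μ X := by
  classical
  unfold H
  congr 1
  have himg : Finset.univ.image (fun ω => g (X ω)) = (Finset.univ.image X).image g := by
    rw [Finset.image_image]; rfl
  rw [himg, Finset.sum_image (fun a _ b _ h => hg h)]
  exact Finset.sum_congr rfl fun a _ => by rw [prob_comp_inj hg]

open Classical in
noncomputable def pushf (μ : Ω → ℝ) (T : Ω → Ω') : Ω' → ℝ :=
  fun ω' => ∑ ω, if T ω = ω' then μ ω else 0

lemma pushf_isPMF {μ : Ω → ℝ} (hμ : IsPMF μ) (T : Ω → Ω') : IsPMF (pushf μ T) := by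
  classical
  constructor
  · intro ω'
    simp only [pushf]
    refine Finset.sum_nonneg fun ω _ => ?_
    split
    · exact hμ.1 ω
    · exact le_rfl
  · simp only [pushf]
    rw [Finset.sum_comm, ← hμ.2]
    exact Finset.sum_congr rfl fun ω _ => by simp

lemma prob_pushf (μ : Ω → ℝ) (T : Ω → Ω') (f : Ω' → α) (b : α) :
    prob (pushf μ T) f b = prob μ (fun ω => f (T ω)) b := by
  classical
  simp only [prob_def, pushf]
  have key : ∀ x : Ω', (if f x = b then ∑ ω, if T ω = x then μ ω else 0 else 0)
      = ∑ ω, if T ω = x ∧ f x = b then μ ω else 0 := by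
    intro x
    split
    · next h => exact Finset.sum_congr rfl fun ω _ => by simp [h]
    · next h => exact (Finset.sum_eq_zero fun ω _ => by simp [h]).symm
  rw [Finset.sum_congr rfl fun x _ => key x, Finset.sum_comm]
  refine Finset.sum_congr rfl fun ω _ => ?_
  rw [Finset.sum_eq_single (T ω)]
  · simp
  · intro x _ hne
    simp [Ne.symm hne]
  · simp

lemma H_pushf (μ : Ω → ℝ) (T : Ω → Ω') (f : Ω' → α) :
    H (pushf μ T) f = H μ (fun ω => f (T ω)) := by
  classical
  have h1 : ∀ ω, f (T ω) ∈ Finset.univ.image f :=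
    fun ω => Finset.mem_image.2 ⟨T ω, Finset.mem_univ _, rfl⟩
  have h2 : ∀ ω', f ω' ∈ Finset.univ.image f :=
    fun ω' => Finset.mem_image.2 ⟨ω', Finset.mem_univ _, rfl⟩
  rw [H_superset μ (fun ω => f (T ω)) h1, H_superset (pushf μ T) f h2]
  congr 1
  exact Finset.sum_congr rfl fun a _ => by rw [prob_pushf]

lemma condMutInfo_pushf (μ : Ω → ℝ) (T : Ω → Ω') (A : Ω' → α) (B : Ω' → β) (C : Ω' → γ) :
    condMutInfo (pushf μ T) A B C
      = condMutInfo μ (fun ω => A (T ω)) (fun ω => B (T ω)) (fun ω => C (T ω)) := by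
  unfold condMutInfo
  rw [H_pushf μ T (fun ω' => (A ω', C ω')), H_pushf μ T (fun ω' => (B ω', C ω')),
    H_pushf μ T (fun ω' => (A ω', B ω', C ω')), H_pushf μ T C]

lemma pushf_equiv (μ : Ω → ℝ) (E : Ω ≃ Ω') : pushf μ E = fun ω' => μ (E.symm ω') := by
  classical
  funext ω'
  simp only [pushf]
  rw [Finset.sum_eq_single (E.symm ω')]
  · simp
  · intro ω _ hne
    have : E ω ≠ ω' := fun h => hne (by rw [← h]; simp)
    simp [this]
  · simp

end Core

section Rel
variable {Ω α β γ δ α' β' γ' : Type*} [Fintype Ω]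

lemma condMutInfo_relabel {g₁ : α → α'} {g₂ : β → β'} {g₃ : γ → γ'}
    (h₁ : Function.Injective g₁) (h₂ : Function.Injective g₂) (h₃ : Function.Injective g₃)
    (μ : Ω → ℝ) (A : Ω → α) (B : Ω → β) (C : Ω → γ) :
    condMutInfo μ (fun ω => g₁ (A ω)) (fun ω => g₂ (B ω)) (fun ω => g₃ (C ω))
      = condMutInfo μ A B C := by
  have hg13 : Function.Injective (fun p : α × γ => (g₁ p.1, g₃ p.2)) := by
    intro p q h; simp only [Prod.mk.injEq] at h; exact Prod.ext (h₁ h.1) (h₃ h.2)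
  have hg23 : Function.Injective (fun p : β × γ => (g₂ p.1, g₃ p.2)) := by
    intro p q h; simp only [Prod.mk.injEq] at h; exact Prod.ext (h₂ h.1) (h₃ h.2)
  have hg123 : Function.Injective (fun p : α × β × γ => (g₁ p.1, g₂ p.2.1, g₃ p.2.2)) := by
    intro p q h; simp only [Prod.mk.injEq] at h
    exact Prod.ext (h₁ h.1) (Prod.ext (h₂ h.2.1) (h₃ h.2.2))
  have e1 : H μ (fun ω => (g₁ (A ω), g₃ (C ω))) = H μ (fun ω => (A ω, C ω)) :=
    H_comp_inj hg13 μ (fun ω => (A ω, C ω))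
  have e2 : H μ (fun ω => (g₂ (B ω), g₃ (C ω))) = H μ (fun ω => (B ω, C ω)) :=
    H_comp_inj hg23 μ (fun ω => (B ω, C ω))
  have e3 : H μ (fun ω => (g₁ (A ω), g₂ (B ω), g₃ (C ω))) = H μ (fun ω => (A ω, B ω, C ω)) :=
    H_comp_inj hg123 μ (fun ω => (A ω, B ω, C ω))
  have e4 : H μ (fun ω => g₃ (C ω)) = H μ C := H_comp_inj h₃ μ C
  unfold condMutInfo
  rw [e1, e2, e3, e4]

lemma condMutInfo_comm (μ : Ω → ℝ) (A : Ω → α) (B : Ω → β) (C : Ω → γ) :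
    condMutInfo μ A B C = condMutInfo μ B A C := by
  have e : H μ (fun ω => (A ω, B ω, C ω)) = H μ (fun ω => (B ω, A ω, C ω)) :=
    H_comp_inj (g := fun p : β × α × γ => (p.2.1, p.1, p.2.2))
      (fun p q h => by simp only [Prod.mk.injEq] at h; exact Prod.ext h.2.1 (Prod.ext h.1 h.2.2))
      μ (fun ω => (B ω, A ω, C ω))
  unfold condMutInfo
  rw [e]; ring

lemma condMutInfo_chain (μ : Ω → ℝ) (A : Ω → α) (B : Ω → β) (C : Ω → γ) (D : Ω → δ) :
    condMutInfo μ A (fun ω => (B ω, C ω)) D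
      = condMutInfo μ A B D + condMutInfo μ A C (fun ω => (B ω, D ω)) := by
  have hBCD : H μ (fun ω => ((B ω, C ω), D ω)) = H μ (fun ω => (C ω, (B ω, D ω))) := by
    have h1 : H μ (fun ω => ((B ω, C ω), D ω)) = H μ (fun ω => (B ω, C ω, D ω)) :=
      H_comp_inj (g := fun p : β × γ × δ => ((p.1, p.2.1), p.2.2))
        (fun p q h => by
          simp only [Prod.mk.injEq] at h
          exact Prod.ext h.1.1 (Prod.ext h.1.2 h.2))
        μ (fun ω => (B ω, C ω, D ω))
    have h2 : H μ (fun ω => (C ω, (B ω, D ω))) = H μ (fun ω => (B ω, C ω, D ω)) :=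
      H_comp_inj (g := fun p : β × γ × δ => (p.2.1, (p.1, p.2.2)))
        (fun p q h => by
          simp only [Prod.mk.injEq] at h
          exact Prod.ext h.2.1 (Prod.ext h.1 h.2.2))
        μ (fun ω => (B ω, C ω, D ω))
    rw [h1, h2]
  have hABCD : H μ (fun ω => (A ω, (B ω, C ω), D ω))
      = H μ (fun ω => (A ω, C ω, (B ω, D ω))) := by
    have h1 : H μ (fun ω => (A ω, (B ω, C ω), D ω)) = H μ (fun ω => (A ω, B ω, C ω, D ω)) :=
      H_comp_inj (g := fun p : α × β × γ × δ => (p.1, (p.2.1, p.2.2.1), p.2.2.2))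
        (fun p q h => by
          simp only [Prod.mk.injEq] at h
          exact Prod.ext h.1 (Prod.ext h.2.1.1 (Prod.ext h.2.1.2 h.2.2)))
        μ (fun ω => (A ω, B ω, C ω, D ω))
    have h2 : H μ (fun ω => (A ω, C ω, (B ω, D ω))) = H μ (fun ω => (A ω, B ω, C ω, D ω)) :=
      H_comp_inj (g := fun p : α × β × γ × δ => (p.1, p.2.2.1, (p.2.1, p.2.2.2)))
        (fun p q h => by
          simp only [Prod.mk.injEq] at h
          exact Prod.ext h.1 (Prod.ext h.2.2.1 (Prod.ext h.2.1 h.2.2.2)))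
        μ (fun ω => (A ω, B ω, C ω, D ω))
    rw [h1, h2]
  unfold condMutInfo
  rw [hBCD, hABCD]
  ring

end Rel

section ProdLemmas
variable {Ω₁ Ω₂ α β γ : Type*} [Fintype Ω₁] [Fintype Ω₂]

lemma prod_isPMF {m₁ : Ω₁ → ℝ} {m₂ : Ω₂ → ℝ} (h₁ : IsPMF m₁) (h₂ : IsPMF m₂) :
    IsPMF (fun ω : Ω₁ × Ω₂ => m₁ ω.1 * m₂ ω.2) := by
  constructor
  · exact fun ω => mul_nonneg (h₁.1 ω.1) (h₂.1 ω.2)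
  · rw [Fintype.sum_prod_type]
    simp only [← Finset.mul_sum]
    rw [h₂.2]
    simpa using h₁.2

lemma prob_prod (m₁ : Ω₁ → ℝ) (m₂ : Ω₂ → ℝ) (X₁ : Ω₁ → α) (X₂ : Ω₂ → β) (a : α) (b : β) :
    prob (fun ω : Ω₁ × Ω₂ => m₁ ω.1 * m₂ ω.2) (fun ω => (X₁ ω.1, X₂ ω.2)) (a, b)
      = prob m₁ X₁ a * prob m₂ X₂ b := by
  classical
  simp only [prob_def]
  rw [Fintype.sum_prod_type, Finset.sum_mul_sum]
  refine Finset.sum_congr rfl fun ω₁ _ => Finset.sum_congr rfl fun ω₂ _ => ?_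
  by_cases h1 : X₁ ω₁ = a <;> by_cases h2 : X₂ ω₂ = b <;> simp [Prod.ext_iff, h1, h2]

lemma H_prod {m₁ : Ω₁ → ℝ} {m₂ : Ω₂ → ℝ} (h₁ : IsPMF m₁) (h₂ : IsPMF m₂)
    (X₁ : Ω₁ → α) (X₂ : Ω₂ → β) :
    H (fun ω : Ω₁ × Ω₂ => m₁ ω.1 * m₂ ω.2) (fun ω => (X₁ ω.1, X₂ ω.2))
      = H m₁ X₁ + H m₂ X₂ := by
  classical
  set s₁ := Finset.univ.image X₁ with hs₁def
  set s₂ := Finset.univ.image X₂ with hs₂def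
  have hm₁ : ∀ ω₁, X₁ ω₁ ∈ s₁ := fun ω₁ => Finset.mem_image.2 ⟨ω₁, Finset.mem_univ _, rfl⟩
  have hm₂ : ∀ ω₂, X₂ ω₂ ∈ s₂ := fun ω₂ => Finset.mem_image.2 ⟨ω₂, Finset.mem_univ _, rfl⟩
  have hsub : ∀ ω : Ω₁ × Ω₂, (X₁ ω.1, X₂ ω.2) ∈ s₁ ×ˢ s₂ :=
    fun ω => Finset.mem_product.2 ⟨hm₁ ω.1, hm₂ ω.2⟩
  rw [H_superset _ _ hsub, Finset.sum_product, H_superset m₁ X₁ hm₁, H_superset m₂ X₂ hm₂]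
  have hs1 : ∑ a ∈ s₁, prob m₁ X₁ a = 1 := by rw [sum_prob_superset m₁ X₁ hm₁, h₁.2]
  have hs2 : ∑ b ∈ s₂, prob m₂ X₂ b = 1 := by rw [sum_prob_superset m₂ X₂ hm₂, h₂.2]
  have key : ∀ a b,
      prob (fun ω : Ω₁ × Ω₂ => m₁ ω.1 * m₂ ω.2) (fun ω => (X₁ ω.1, X₂ ω.2)) (a, b)
        * Real.logb 2 (prob (fun ω : Ω₁ × Ω₂ => m₁ ω.1 * m₂ ω.2) (fun ω => (X₁ ω.1, X₂ ω.2)) (a, b))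
      = prob m₁ X₁ a * prob m₂ X₂ b * Real.logb 2 (prob m₁ X₁ a)
        + prob m₁ X₁ a * prob m₂ X₂ b * Real.logb 2 (prob m₂ X₂ b) := by
    intro a b
    rw [prob_prod]
    by_cases hx : prob m₁ X₁ a = 0
    · simp [hx]
    by_cases hy : prob m₂ X₂ b = 0
    · simp [hy]
    rw [Real.logb, Real.log_mul hx hy]
    simp only [Real.logb]
    ring
  rw [Finset.sum_congr rfl fun a _ => Finset.sum_congr rfl fun b _ => key a b]
  simp only [Finset.sum_add_distrib]
  have t1 : ∑ a ∈ s₁, ∑ b ∈ s₂, prob m₁ X₁ a * prob m₂ X₂ b * Real.logb 2 (prob m₁ X₁ a)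
      = ∑ a ∈ s₁, prob m₁ X₁ a * Real.logb 2 (prob m₁ X₁ a) := by
    refine Finset.sum_congr rfl fun a _ => ?_
    calc ∑ b ∈ s₂, prob m₁ X₁ a * prob m₂ X₂ b * Real.logb 2 (prob m₁ X₁ a)
        = (∑ b ∈ s₂, prob m₂ X₂ b) * (prob m₁ X₁ a * Real.logb 2 (prob m₁ X₁ a)) := by
          rw [Finset.sum_mul]
          exact Finset.sum_congr rfl fun b _ => by ring
      _ = prob m₁ X₁ a * Real.logb 2 (prob m₁ X₁ a) := by rw [hs2, one_mul]
  have t2 : ∑ a ∈ s₁, ∑ b ∈ s₂, prob m₁ X₁ a * prob m₂ X₂ b * Real.logb 2 (prob m₂ X₂ b)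
      = ∑ b ∈ s₂, prob m₂ X₂ b * Real.logb 2 (prob m₂ X₂ b) := by
    rw [Finset.sum_comm]
    refine Finset.sum_congr rfl fun b _ => ?_
    calc ∑ a ∈ s₁, prob m₁ X₁ a * prob m₂ X₂ b * Real.logb 2 (prob m₂ X₂ b)
        = (∑ a ∈ s₁, prob m₁ X₁ a) * (prob m₂ X₂ b * Real.logb 2 (prob m₂ X₂ b)) := by
          rw [Finset.sum_mul]
          exact Finset.sum_congr rfl fun a _ => by ring
      _ = prob m₂ X₂ b * Real.logb 2 (prob m₂ X₂ b) := by rw [hs1, one_mul]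
  rw [t1, t2]
  ring

lemma H_proj₁ {m₁ : Ω₁ → ℝ} {m₂ : Ω₂ → ℝ} (h₂ : IsPMF m₂) (f : Ω₁ → α) :
    H (fun ω : Ω₁ × Ω₂ => m₁ ω.1 * m₂ ω.2) (fun ω => f ω.1) = H m₁ f := by
  classical
  have hp : pushf (fun ω : Ω₁ × Ω₂ => m₁ ω.1 * m₂ ω.2) Prod.fst = m₁ := by
    funext ω₁
    simp only [pushf]
    rw [Fintype.sum_prod_type]
    have key : ∀ u : Ω₁, (∑ v : Ω₂, if (u, v).1 = ω₁ then m₁ u * m₂ v else 0)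
        = if u = ω₁ then m₁ u else 0 := by
      intro u
      by_cases h : u = ω₁
      · simp only [h, if_true]
        rw [← Finset.mul_sum, h₂.2, mul_one]
      · simp [h]
    rw [Finset.sum_congr rfl fun u _ => key u]
    simp
  have h := H_pushf (fun ω : Ω₁ × Ω₂ => m₁ ω.1 * m₂ ω.2) Prod.fst f
  rw [hp] at h
  exact h.symm

end ProdLemmas

section ProdCMI
variable {Ω₁ Ω₂ α β γ α' β' γ' : Type*} [Fintype Ω₁] [Fintype Ω₂]

lemma condMutInfo_prod_add {m₁ : Ω₁ → ℝ} {m₂ : Ω₂ → ℝ} (h₁ : IsPMF m₁) (h₂ : IsPMF m₂)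
    (A₁ : Ω₁ → α) (B₁ : Ω₁ → β) (C₁ : Ω₁ → γ) (A₂ : Ω₂ → α') (B₂ : Ω₂ → β') (C₂ : Ω₂ → γ') :
    condMutInfo (fun ω : Ω₁ × Ω₂ => m₁ ω.1 * m₂ ω.2)
      (fun ω => (A₁ ω.1, A₂ ω.2)) (fun ω => (B₁ ω.1, B₂ ω.2)) (fun ω => (C₁ ω.1, C₂ ω.2))
    = condMutInfo m₁ A₁ B₁ C₁ + condMutInfo m₂ A₂ B₂ C₂ := by
  have eAC : H (fun ω : Ω₁ × Ω₂ => m₁ ω.1 * m₂ ω.2)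
        (fun ω => ((A₁ ω.1, A₂ ω.2), (C₁ ω.1, C₂ ω.2)))
      = H m₁ (fun ω => (A₁ ω, C₁ ω)) + H m₂ (fun ω => (A₂ ω, C₂ ω)) := by
    have r : H (fun ω : Ω₁ × Ω₂ => m₁ ω.1 * m₂ ω.2)
          (fun ω => ((A₁ ω.1, A₂ ω.2), (C₁ ω.1, C₂ ω.2)))
        = H (fun ω : Ω₁ × Ω₂ => m₁ ω.1 * m₂ ω.2)
          (fun ω => ((A₁ ω.1, C₁ ω.1), (A₂ ω.2, C₂ ω.2))) := by
      exact H_comp_inj (g := fun p : (α × γ) × (α' × γ') => ((p.1.1, p.2.1), (p.1.2, p.2.2)))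
        (Equiv.injective ⟨fun p => ((p.1.1, p.2.1), (p.1.2, p.2.2)),
          fun q => ((q.1.1, q.2.1), (q.1.2, q.2.2)), fun _ => rfl, fun _ => rfl⟩)
        (fun ω : Ω₁ × Ω₂ => m₁ ω.1 * m₂ ω.2) (fun ω => ((A₁ ω.1, C₁ ω.1), (A₂ ω.2, C₂ ω.2)))
    rw [r]
    exact H_prod h₁ h₂ (fun ω => (A₁ ω, C₁ ω)) (fun ω => (A₂ ω, C₂ ω))
  have eBC : H (fun ω : Ω₁ × Ω₂ => m₁ ω.1 * m₂ ω.2)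
        (fun ω => ((B₁ ω.1, B₂ ω.2), (C₁ ω.1, C₂ ω.2)))
      = H m₁ (fun ω => (B₁ ω, C₁ ω)) + H m₂ (fun ω => (B₂ ω, C₂ ω)) := by
    have r : H (fun ω : Ω₁ × Ω₂ => m₁ ω.1 * m₂ ω.2)
          (fun ω => ((B₁ ω.1, B₂ ω.2), (C₁ ω.1, C₂ ω.2)))
        = H (fun ω : Ω₁ × Ω₂ => m₁ ω.1 * m₂ ω.2)
          (fun ω => ((B₁ ω.1, C₁ ω.1), (B₂ ω.2, C₂ ω.2))) := by
      exact H_comp_inj (g := fun p : (β × γ) × (β' × γ') => ((p.1.1, p.2.1), (p.1.2, p.2.2)))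
        (Equiv.injective ⟨fun p => ((p.1.1, p.2.1), (p.1.2, p.2.2)),
          fun q => ((q.1.1, q.2.1), (q.1.2, q.2.2)), fun _ => rfl, fun _ => rfl⟩)
        (fun ω : Ω₁ × Ω₂ => m₁ ω.1 * m₂ ω.2) (fun ω => ((B₁ ω.1, C₁ ω.1), (B₂ ω.2, C₂ ω.2)))
    rw [r]
    exact H_prod h₁ h₂ (fun ω => (B₁ ω, C₁ ω)) (fun ω => (B₂ ω, C₂ ω))
  have eABC : H (fun ω : Ω₁ × Ω₂ => m₁ ω.1 * m₂ ω.2)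
        (fun ω => ((A₁ ω.1, A₂ ω.2), (B₁ ω.1, B₂ ω.2), (C₁ ω.1, C₂ ω.2)))
      = H m₁ (fun ω => (A₁ ω, B₁ ω, C₁ ω)) + H m₂ (fun ω => (A₂ ω, B₂ ω, C₂ ω)) := by
    have r : H (fun ω : Ω₁ × Ω₂ => m₁ ω.1 * m₂ ω.2)
          (fun ω => ((A₁ ω.1, A₂ ω.2), (B₁ ω.1, B₂ ω.2), (C₁ ω.1, C₂ ω.2)))
        = H (fun ω : Ω₁ × Ω₂ => m₁ ω.1 * m₂ ω.2)
          (fun ω => ((A₁ ω.1, B₁ ω.1, C₁ ω.1), (A₂ ω.2, B₂ ω.2, C₂ ω.2))) := by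
      exact H_comp_inj
        (g := fun p : (α × β × γ) × (α' × β' × γ') =>
          ((p.1.1, p.2.1), (p.1.2.1, p.2.2.1), (p.1.2.2, p.2.2.2)))
        (Equiv.injective ⟨fun p => ((p.1.1, p.2.1), (p.1.2.1, p.2.2.1), (p.1.2.2, p.2.2.2)),
          fun q => ((q.1.1, q.2.1.1, q.2.2.1), (q.1.2, q.2.1.2, q.2.2.2)),
          fun _ => rfl, fun _ => rfl⟩)
        (fun ω : Ω₁ × Ω₂ => m₁ ω.1 * m₂ ω.2) (fun ω => ((A₁ ω.1, B₁ ω.1, C₁ ω.1), (A₂ ω.2, B₂ ω.2, C₂ ω.2)))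
    rw [r]
    exact H_prod h₁ h₂ (fun ω => (A₁ ω, B₁ ω, C₁ ω)) (fun ω => (A₂ ω, B₂ ω, C₂ ω))
  have eC : H (fun ω : Ω₁ × Ω₂ => m₁ ω.1 * m₂ ω.2) (fun ω => (C₁ ω.1, C₂ ω.2))
      = H m₁ C₁ + H m₂ C₂ := H_prod h₁ h₂ C₁ C₂
  unfold condMutInfo
  rw [eAC, eBC, eABC, eC]
  ring

lemma condMutInfo_prod_zero₁ {m₁ : Ω₁ → ℝ} {m₂ : Ω₂ → ℝ} (h₁ : IsPMF m₁) (h₂ : IsPMF m₂)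
    (U : Ω₁ → α) (W : Ω₂ → β) (V : Ω₁ → γ) :
    condMutInfo (fun ω : Ω₁ × Ω₂ => m₁ ω.1 * m₂ ω.2)
      (fun ω => U ω.1) (fun ω => W ω.2) (fun ω => V ω.1) = 0 := by
  have tAC : H (fun ω : Ω₁ × Ω₂ => m₁ ω.1 * m₂ ω.2) (fun ω => (U ω.1, V ω.1))
      = H m₁ (fun ω => (U ω, V ω)) := H_proj₁ h₂ (fun ω => (U ω, V ω))
  have tBC : H (fun ω : Ω₁ × Ω₂ => m₁ ω.1 * m₂ ω.2) (fun ω => (W ω.2, V ω.1))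
      = H m₁ V + H m₂ W := by
    have r : H (fun ω : Ω₁ × Ω₂ => m₁ ω.1 * m₂ ω.2) (fun ω => (W ω.2, V ω.1))
        = H (fun ω : Ω₁ × Ω₂ => m₁ ω.1 * m₂ ω.2) (fun ω => (V ω.1, W ω.2)) := by
      exact H_comp_inj (g := fun p : γ × β => (p.2, p.1))
        (Equiv.injective ⟨fun p : γ × β => (p.2, p.1), fun q => (q.2, q.1),
          fun _ => rfl, fun _ => rfl⟩)
        (fun ω : Ω₁ × Ω₂ => m₁ ω.1 * m₂ ω.2) (fun ω => (V ω.1, W ω.2))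
    rw [r]
    exact H_prod h₁ h₂ V W
  have tABC : H (fun ω : Ω₁ × Ω₂ => m₁ ω.1 * m₂ ω.2) (fun ω => (U ω.1, W ω.2, V ω.1))
      = H m₁ (fun ω => (U ω, V ω)) + H m₂ W := by
    have r : H (fun ω : Ω₁ × Ω₂ => m₁ ω.1 * m₂ ω.2) (fun ω => (U ω.1, W ω.2, V ω.1))
        = H (fun ω : Ω₁ × Ω₂ => m₁ ω.1 * m₂ ω.2) (fun ω => ((U ω.1, V ω.1), W ω.2)) := by
      exact H_comp_inj (g := fun p : (α × γ) × β => (p.1.1, p.2, p.1.2))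
        (Equiv.injective ⟨fun p : (α × γ) × β => (p.1.1, p.2, p.1.2),
          fun q => ((q.1, q.2.2), q.2.1), fun _ => rfl, fun _ => rfl⟩)
        (fun ω : Ω₁ × Ω₂ => m₁ ω.1 * m₂ ω.2) (fun ω => ((U ω.1, V ω.1), W ω.2))
    rw [r]
    exact H_prod h₁ h₂ (fun ω => (U ω, V ω)) W
  have tC : H (fun ω : Ω₁ × Ω₂ => m₁ ω.1 * m₂ ω.2) (fun ω => V ω.1) = H m₁ V :=
    H_proj₁ h₂ V
  unfold condMutInfo
  rw [tAC, tBC, tABC, tC]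
  ring

lemma condMutInfo_prod_zero₂ {m₁ : Ω₁ → ℝ} {m₂ : Ω₂ → ℝ} (h₁ : IsPMF m₁) (h₂ : IsPMF m₂)
    (U : Ω₂ → α) (W : Ω₁ → β) (V : Ω₂ → γ) :
    condMutInfo (fun ω : Ω₁ × Ω₂ => m₁ ω.1 * m₂ ω.2)
      (fun ω => U ω.2) (fun ω => W ω.1) (fun ω => V ω.2) = 0 := by
  have hm : (fun ω : Ω₁ × Ω₂ => m₁ ω.1 * m₂ ω.2)
      = pushf (fun ω : Ω₂ × Ω₁ => m₂ ω.1 * m₁ ω.2)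
          (⟨fun p => (p.2, p.1), fun p => (p.2, p.1), fun _ => rfl, fun _ => rfl⟩ :
            (Ω₂ × Ω₁) ≃ (Ω₁ × Ω₂)) := by
    rw [pushf_equiv]
    funext v
    exact (mul_comm _ _)
  rw [hm, condMutInfo_pushf]
  exact condMutInfo_prod_zero₁ h₂ h₁ U W V

end ProdCMI

section Marg
variable {Ω α β : Type*} [Fintype Ω]

lemma prob_marg (μ : Ω → ℝ) (X : Ω → α) (Y : Ω → β) {S : Finset β}
    (hS : ∀ ω, Y ω ∈ S) (a : α) :
    prob μ X a = ∑ b ∈ S, prob μ (fun ω => (X ω, Y ω)) (a, b) := by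
  classical
  simp only [prob_def]
  rw [Finset.sum_comm]
  refine Finset.sum_congr rfl fun ω _ => ?_
  by_cases hX : X ω = a
  · rw [if_pos hX]
    refine ((Finset.sum_eq_single_of_mem (Y ω) (hS ω) ?_).trans ?_).symm
    · intro x _ hx
      exact if_neg fun hcon => hx ((Prod.ext_iff.1 hcon).2).symm
    · exact if_pos (by rw [hX])
  · rw [if_neg hX]
    exact (Finset.sum_eq_zero fun x _ => if_neg fun hcon => hX (Prod.ext_iff.1 hcon).1).symm

end Marg

lemma log_ineq {x u v w : ℝ} (hx : 0 ≤ x) (hu : x ≤ u) (hv : x ≤ v) (huw : u ≤ w)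
    (hu0 : 0 ≤ u) (hv0 : 0 ≤ v) :
    (1 / Real.log 2) * (x - u * v / w)
      ≤ x * (Real.logb 2 x + Real.logb 2 w - Real.logb 2 u - Real.logb 2 v) := by
  have hlog2 : 0 < Real.log 2 := Real.log_pos (by norm_num)
  rcases eq_or_lt_of_le hx with h0 | hxpos
  · -- x = 0
    rw [← h0]
    have hw0 : 0 ≤ w := le_trans hu0 huw
    have : 0 ≤ u * v / w := div_nonneg (mul_nonneg hu0 hv0) hw0
    have h1 : (1 / Real.log 2) * (0 - u * v / w) ≤ 0 := by
      apply mul_nonpos_of_nonneg_of_nonpos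
      · positivity
      · linarith
    simpa using h1
  · have hupos : 0 < u := lt_of_lt_of_le hxpos hu
    have hvpos : 0 < v := lt_of_lt_of_le hxpos hv
    have hwpos : 0 < w := lt_of_lt_of_le hupos huw
    set z : ℝ := x * w / (u * v) with hz
    have hzpos : 0 < z := by positivity
    have hlb : Real.log z = Real.log x + Real.log w - Real.log u - Real.log v := by
      rw [hz, Real.log_div (by positivity) (by positivity),
        Real.log_mul (ne_of_gt hxpos) (ne_of_gt hwpos),
        Real.log_mul (ne_of_gt hupos) (ne_of_gt hvpos)]
      ring
    have key : 1 - z⁻¹ ≤ Real.log z := by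
      have h := Real.log_le_sub_one_of_pos (show (0:ℝ) < z⁻¹ by positivity)
      rw [Real.log_inv] at h
      linarith
    have e1 : (1 / Real.log 2) * (x - u * v / w) = (x / Real.log 2) * (1 - z⁻¹) := by
      rw [hz, inv_div]
      field_simp
    have e2 : x * (Real.logb 2 x + Real.logb 2 w - Real.logb 2 u - Real.logb 2 v)
        = (x / Real.log 2) * Real.log z := by
      rw [hlb]
      simp only [Real.logb]
      field_simp
    rw [e1, e2]
    exact mul_le_mul_of_nonneg_left key (by positivity)

section CMICore
variable {α β γ : Type*}

lemma cmi_core (sA : Finset α) (sB : Finset β) (sC : Finset γ)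
    (p3 : α → β → γ → ℝ) (pAC : α → γ → ℝ) (pBC : β → γ → ℝ) (pC : γ → ℝ)
    (h3 : ∀ a b c, 0 ≤ p3 a b c)
    (f1 : ∀ a c, pAC a c = ∑ b ∈ sB, p3 a b c)
    (f1' : ∀ b c, pBC b c = ∑ a ∈ sA, p3 a b c)
    (f2 : ∀ c, pC c = ∑ a ∈ sA, pAC a c)
    (f2' : ∀ c, pC c = ∑ b ∈ sB, pBC b c)
    (m1 : ∀ a b c, p3 a b c ≤ pAC a c)
    (m2 : ∀ a b c, p3 a b c ≤ pBC b c)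
    (m3 : ∀ a c, pAC a c ≤ pC c)
    (hn1 : ∀ a c, 0 ≤ pAC a c)
    (hn2 : ∀ b c, 0 ≤ pBC b c)
    (hsum : ∑ a ∈ sA, ∑ b ∈ sB, ∑ c ∈ sC, p3 a b c = 1)
    (hsC : ∑ c ∈ sC, pC c = 1) :
    0 ≤ ∑ a ∈ sA, ∑ b ∈ sB, ∑ c ∈ sC,
      p3 a b c * (Real.logb 2 (p3 a b c) + Real.logb 2 (pC c)
        - Real.logb 2 (pAC a c) - Real.logb 2 (pBC b c)) := by
  have hlog2 : 0 < Real.log 2 := Real.log_pos (by norm_num)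
  -- lower bound each term
  have hlow : ∑ a ∈ sA, ∑ b ∈ sB, ∑ c ∈ sC,
      (1 / Real.log 2) * (p3 a b c - pAC a c * pBC b c / pC c)
      ≤ ∑ a ∈ sA, ∑ b ∈ sB, ∑ c ∈ sC,
      p3 a b c * (Real.logb 2 (p3 a b c) + Real.logb 2 (pC c)
        - Real.logb 2 (pAC a c) - Real.logb 2 (pBC b c)) := by
    refine Finset.sum_le_sum fun a _ => Finset.sum_le_sum fun b _ => Finset.sum_le_sum fun c _ => ?_
    exact log_ineq (h3 a b c) (m1 a b c) (m2 a b c) (m3 a c) (hn1 a c) (hn2 b c)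
  refine le_trans (le_of_eq ?_) hlow
  -- compute the lower bound = 0
  have hq : ∑ a ∈ sA, ∑ b ∈ sB, ∑ c ∈ sC, pAC a c * pBC b c / pC c = 1 := by
    have swap1 : ∑ a ∈ sA, ∑ b ∈ sB, ∑ c ∈ sC, pAC a c * pBC b c / pC c
        = ∑ c ∈ sC, ∑ a ∈ sA, ∑ b ∈ sB, pAC a c * pBC b c / pC c := by
      rw [show (∑ a ∈ sA, ∑ b ∈ sB, ∑ c ∈ sC, pAC a c * pBC b c / pC c)
          = ∑ a ∈ sA, ∑ c ∈ sC, ∑ b ∈ sB, pAC a c * pBC b c / pC c from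
        Finset.sum_congr rfl fun a _ => Finset.sum_comm]
      exact Finset.sum_comm
    rw [swap1, ← hsC]
    refine Finset.sum_congr rfl fun c _ => ?_
    by_cases hc : pC c = 0
    · have hpac0 : ∀ a, pAC a c = 0 := by
        intro a
        have := m3 a c
        have := hn1 a c
        linarith [hc ▸ this]
      rw [hc]
      refine Finset.sum_eq_zero fun a _ => Finset.sum_eq_zero fun b _ => ?_
      rw [hpac0 a]
      simp
    · have inner : ∀ a, ∑ b ∈ sB, pAC a c * pBC b c / pC c = pAC a c := by
        intro a
        have : ∑ b ∈ sB, pAC a c * pBC b c / pC c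
            = (∑ b ∈ sB, pBC b c) * (pAC a c / pC c) := by
          rw [Finset.sum_mul]
          exact Finset.sum_congr rfl fun b _ => by ring
        rw [this, ← f2' c]
        field_simp
      rw [Finset.sum_congr rfl fun a _ => inner a, ← f2 c]
  have expand : ∑ a ∈ sA, ∑ b ∈ sB, ∑ c ∈ sC,
      (1 / Real.log 2) * (p3 a b c - pAC a c * pBC b c / pC c)
      = (1 / Real.log 2) *
        ((∑ a ∈ sA, ∑ b ∈ sB, ∑ c ∈ sC, p3 a b c)
          - (∑ a ∈ sA, ∑ b ∈ sB, ∑ c ∈ sC, pAC a c * pBC b c / pC c)) := by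
    simp only [← Finset.mul_sum, ← Finset.sum_sub_distrib]
  rw [expand, hsum, hq]
  simp

end CMICore

lemma condMutInfo_nonneg {Ω α β γ : Type*} [Fintype Ω] {μ : Ω → ℝ} (hμ : IsPMF μ)
    (A : Ω → α) (B : Ω → β) (C : Ω → γ) : 0 ≤ condMutInfo μ A B C := by
  classical
  set sA := Finset.univ.image A with hsA
  set sB := Finset.univ.image B with hsB
  set sC := Finset.univ.image C with hsC
  have hmA : ∀ ω, A ω ∈ sA := fun ω => Finset.mem_image.2 ⟨ω, Finset.mem_univ _, rfl⟩
  have hmB : ∀ ω, B ω ∈ sB := fun ω => Finset.mem_image.2 ⟨ω, Finset.mem_univ _, rfl⟩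
  have hmC : ∀ ω, C ω ∈ sC := fun ω => Finset.mem_image.2 ⟨ω, Finset.mem_univ _, rfl⟩
  set p3 : α → β → γ → ℝ := fun a b c => prob μ (fun ω => (A ω, B ω, C ω)) (a, b, c) with hp3
  set pAC : α → γ → ℝ := fun a c => prob μ (fun ω => (A ω, C ω)) (a, c) with hpAC
  set pBC : β → γ → ℝ := fun b c => prob μ (fun ω => (B ω, C ω)) (b, c) with hpBC
  set pC : γ → ℝ := fun c => prob μ C c with hpC
  -- marginal identities
  have f1 : ∀ a c, pAC a c = ∑ b ∈ sB, p3 a b c := by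
    intro a c
    have h0 : prob μ (fun ω => (A ω, C ω)) (a, c)
        = ∑ b ∈ sB, prob μ (fun ω => ((A ω, C ω), B ω)) ((a, c), b) :=
      prob_marg μ (fun ω => (A ω, C ω)) B hmB (a, c)
    show prob μ (fun ω => (A ω, C ω)) (a, c) = ∑ b ∈ sB, p3 a b c
    rw [h0]
    refine Finset.sum_congr rfl fun b _ => ?_
    have : prob μ (fun ω => ((A ω, C ω), B ω)) ((a, c), b)
        = prob μ (fun ω => (A ω, B ω, C ω)) (a, b, c) := by
      exact prob_comp_inj (g := fun t : α × β × γ => ((t.1, t.2.2), t.2.1))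
        (Equiv.injective ⟨fun t : α × β × γ => ((t.1, t.2.2), t.2.1),
          fun q => (q.1.1, q.2, q.1.2), fun _ => rfl, fun _ => rfl⟩)
        μ (fun ω => (A ω, B ω, C ω)) (a, b, c)
    exact this
  have f1' : ∀ b c, pBC b c = ∑ a ∈ sA, p3 a b c := by
    intro b c
    have h0 : prob μ (fun ω => (B ω, C ω)) (b, c)
        = ∑ a ∈ sA, prob μ (fun ω => ((B ω, C ω), A ω)) ((b, c), a) :=
      prob_marg μ (fun ω => (B ω, C ω)) A hmA (b, c)
    show prob μ (fun ω => (B ω, C ω)) (b, c) = ∑ a ∈ sA, p3 a b c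
    rw [h0]
    refine Finset.sum_congr rfl fun a _ => ?_
    have : prob μ (fun ω => ((B ω, C ω), A ω)) ((b, c), a)
        = prob μ (fun ω => (A ω, B ω, C ω)) (a, b, c) := by
      exact prob_comp_inj (g := fun t : α × β × γ => ((t.2.1, t.2.2), t.1))
        (Equiv.injective ⟨fun t : α × β × γ => ((t.2.1, t.2.2), t.1),
          fun q => (q.2, q.1.1, q.1.2), fun _ => rfl, fun _ => rfl⟩)
        μ (fun ω => (A ω, B ω, C ω)) (a, b, c)
    exact this
  have f2 : ∀ c, pC c = ∑ a ∈ sA, pAC a c := by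
    intro c
    have h0 : prob μ C c = ∑ a ∈ sA, prob μ (fun ω => (C ω, A ω)) (c, a) :=
      prob_marg μ C A hmA c
    show prob μ C c = ∑ a ∈ sA, pAC a c
    rw [h0]
    refine Finset.sum_congr rfl fun a _ => ?_
    have : prob μ (fun ω => (C ω, A ω)) (c, a)
        = prob μ (fun ω => (A ω, C ω)) (a, c) := by
      exact prob_comp_inj (g := fun t : α × γ => (t.2, t.1))
        (Equiv.injective ⟨fun t : α × γ => (t.2, t.1), fun q => (q.2, q.1),
          fun _ => rfl, fun _ => rfl⟩)
        μ (fun ω => (A ω, C ω)) (a, c)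
    exact this
  have f2' : ∀ c, pC c = ∑ b ∈ sB, pBC b c := by
    intro c
    have h0 : prob μ C c = ∑ b ∈ sB, prob μ (fun ω => (C ω, B ω)) (c, b) :=
      prob_marg μ C B hmB c
    show prob μ C c = ∑ b ∈ sB, pBC b c
    rw [h0]
    refine Finset.sum_congr rfl fun b _ => ?_
    have : prob μ (fun ω => (C ω, B ω)) (c, b)
        = prob μ (fun ω => (B ω, C ω)) (b, c) := by
      exact prob_comp_inj (g := fun t : β × γ => (t.2, t.1))
        (Equiv.injective ⟨fun t : β × γ => (t.2, t.1), fun q => (q.2, q.1),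
          fun _ => rfl, fun _ => rfl⟩)
        μ (fun ω => (B ω, C ω)) (b, c)
    exact this
  -- monotonicity
  have m1 : ∀ a b c, p3 a b c ≤ pAC a c := by
    intro a b c
    have h := prob_comp_le hμ.1 (fun ω => (A ω, B ω, C ω))
      (fun t : α × β × γ => (t.1, t.2.2)) (a, b, c)
    exact h
  have m2 : ∀ a b c, p3 a b c ≤ pBC b c := by
    intro a b c
    have h := prob_comp_le hμ.1 (fun ω => (A ω, B ω, C ω))
      (fun t : α × β × γ => t.2) (a, b, c)
    exact h
  have m3 : ∀ a c, pAC a c ≤ pC c := by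
    intro a c
    have h := prob_comp_le hμ.1 (fun ω => (A ω, C ω)) (fun t : α × γ => t.2) (a, c)
    exact h
  have h3 : ∀ a b c, 0 ≤ p3 a b c := fun a b c => prob_nonneg hμ.1 _ _
  have hn1 : ∀ a c, 0 ≤ pAC a c := fun a c => prob_nonneg hμ.1 _ _
  have hn2 : ∀ b c, 0 ≤ pBC b c := fun b c => prob_nonneg hμ.1 _ _
  -- total sums
  have hmem3 : ∀ ω, ((A ω, B ω, C ω) : α × β × γ) ∈ sA ×ˢ sB ×ˢ sC := fun ω =>
    Finset.mem_product.2 ⟨hmA ω, Finset.mem_product.2 ⟨hmB ω, hmC ω⟩⟩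
  have hsum : ∑ a ∈ sA, ∑ b ∈ sB, ∑ c ∈ sC, p3 a b c = 1 := by
    have h0 : ∑ t ∈ sA ×ˢ sB ×ˢ sC, prob μ (fun ω => (A ω, B ω, C ω)) t = ∑ ω, μ ω :=
      sum_prob_superset μ (fun ω => (A ω, B ω, C ω)) hmem3
    rw [Finset.sum_product] at h0
    have h1 : ∀ a, ∑ t ∈ sB ×ˢ sC, prob μ (fun ω => (A ω, B ω, C ω)) (a, t)
        = ∑ b ∈ sB, ∑ c ∈ sC, p3 a b c := fun a => Finset.sum_product _ _ _
    rw [Finset.sum_congr rfl fun a _ => h1 a] at h0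
    rw [h0, hμ.2]
  have hsC2 : ∑ c ∈ sC, pC c = 1 := by
    have h0 : ∑ c ∈ sC, prob μ C c = ∑ ω, μ ω := sum_prob_superset μ C hmC
    show ∑ c ∈ sC, prob μ C c = 1
    rw [h0, hμ.2]
  -- entropy identities
  have eACpair : H μ (fun ω => (A ω, C ω))
      = -∑ a ∈ sA, ∑ c ∈ sC, pAC a c * Real.logb 2 (pAC a c) := by
    have hm : ∀ ω, ((A ω, C ω) : α × γ) ∈ sA ×ˢ sC := fun ω =>
      Finset.mem_product.2 ⟨hmA ω, hmC ω⟩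
    rw [H_superset μ (fun ω => (A ω, C ω)) hm, Finset.sum_product]
  have eBCpair : H μ (fun ω => (B ω, C ω))
      = -∑ b ∈ sB, ∑ c ∈ sC, pBC b c * Real.logb 2 (pBC b c) := by
    have hm : ∀ ω, ((B ω, C ω) : β × γ) ∈ sB ×ˢ sC := fun ω =>
      Finset.mem_product.2 ⟨hmB ω, hmC ω⟩
    rw [H_superset μ (fun ω => (B ω, C ω)) hm, Finset.sum_product]
  have e3 : H μ (fun ω => (A ω, B ω, C ω))
      = -∑ a ∈ sA, ∑ b ∈ sB, ∑ c ∈ sC, p3 a b c * Real.logb 2 (p3 a b c) := by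
    rw [H_superset μ (fun ω => (A ω, B ω, C ω)) hmem3, Finset.sum_product]
    congr 1
    exact Finset.sum_congr rfl fun a _ => Finset.sum_product _ _ _
  have eC : H μ C = -∑ c ∈ sC, pC c * Real.logb 2 (pC c) := by
    rw [H_superset μ C hmC]
  -- rewrite pair entropies as triple sums
  have eAC : H μ (fun ω => (A ω, C ω))
      = -∑ a ∈ sA, ∑ b ∈ sB, ∑ c ∈ sC, p3 a b c * Real.logb 2 (pAC a c) := by
    rw [eACpair]
    congr 1
    refine Finset.sum_congr rfl fun a _ => ?_
    rw [show (∑ b ∈ sB, ∑ c ∈ sC, p3 a b c * Real.logb 2 (pAC a c))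
        = ∑ c ∈ sC, ∑ b ∈ sB, p3 a b c * Real.logb 2 (pAC a c) from Finset.sum_comm]
    refine Finset.sum_congr rfl fun c _ => ?_
    rw [f1, Finset.sum_mul]
  have eBC : H μ (fun ω => (B ω, C ω))
      = -∑ a ∈ sA, ∑ b ∈ sB, ∑ c ∈ sC, p3 a b c * Real.logb 2 (pBC b c) := by
    rw [eBCpair]
    congr 1
    rw [show (∑ a ∈ sA, ∑ b ∈ sB, ∑ c ∈ sC, p3 a b c * Real.logb 2 (pBC b c))
        = ∑ b ∈ sB, ∑ a ∈ sA, ∑ c ∈ sC, p3 a b c * Real.logb 2 (pBC b c) from Finset.sum_comm]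
    refine Finset.sum_congr rfl fun b _ => ?_
    rw [show (∑ a ∈ sA, ∑ c ∈ sC, p3 a b c * Real.logb 2 (pBC b c))
        = ∑ c ∈ sC, ∑ a ∈ sA, p3 a b c * Real.logb 2 (pBC b c) from Finset.sum_comm]
    refine Finset.sum_congr rfl fun c _ => ?_
    rw [f1', Finset.sum_mul]
  have eCtriple : H μ C
      = -∑ a ∈ sA, ∑ b ∈ sB, ∑ c ∈ sC, p3 a b c * Real.logb 2 (pC c) := by
    rw [eC]
    congr 1
    rw [show (∑ a ∈ sA, ∑ b ∈ sB, ∑ c ∈ sC, p3 a b c * Real.logb 2 (pC c))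
        = ∑ c ∈ sC, ∑ a ∈ sA, ∑ b ∈ sB, p3 a b c * Real.logb 2 (pC c) from ?_]
    · refine Finset.sum_congr rfl fun c _ => ?_
      rw [f2]
      rw [Finset.sum_mul]
      refine Finset.sum_congr rfl fun a _ => ?_
      rw [f1, Finset.sum_mul]
    · rw [show (∑ a ∈ sA, ∑ b ∈ sB, ∑ c ∈ sC, p3 a b c * Real.logb 2 (pC c))
          = ∑ a ∈ sA, ∑ c ∈ sC, ∑ b ∈ sB, p3 a b c * Real.logb 2 (pC c) from
        Finset.sum_congr rfl fun a _ => Finset.sum_comm]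
      exact Finset.sum_comm
  -- combine
  have comb : condMutInfo μ A B C
      = ∑ a ∈ sA, ∑ b ∈ sB, ∑ c ∈ sC,
          p3 a b c * (Real.logb 2 (p3 a b c) + Real.logb 2 (pC c)
            - Real.logb 2 (pAC a c) - Real.logb 2 (pBC b c)) := by
    unfold condMutInfo
    rw [eAC, eBC, e3, eCtriple]
    simp only [mul_add, mul_sub, Finset.sum_add_distrib, Finset.sum_sub_distrib]
    ring
  rw [comb]
  exact cmi_core sA sB sC p3 pAC pBC pC h3 f1 f1' f2 f2' m1 m2 m3 hn1 hn2 hsum hsC2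

section Helpers
variable {Ω α : Type*} [Fintype Ω]

lemma prob_id (μ : Ω → ℝ) (a : Ω) : prob μ (fun ω => ω) a = μ a := by
  classical
  rw [prob_def]
  rw [Finset.sum_ite_eq' Finset.univ a μ]
  simp

end Helpers

section Helpers2
variable {A B C : Type*} [Fintype A] [Fintype B] [Fintype C]
variable {Ω : Type*} [Fintype Ω]

lemma sum_pushf_last (μ : Ω → ℝ) (X : Ω → A) (Y : Ω → B) (Z : Ω → C) (a : A) (b : B) :
    ∑ c, pushf μ (fun ω => (X ω, Y ω, Z ω)) (a, b, c)
      = prob μ (fun ω => (X ω, Y ω)) (a, b) := by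
  classical
  have h0 : prob μ (fun ω => (X ω, Y ω)) (a, b)
      = ∑ c ∈ Finset.univ, prob μ (fun ω => ((X ω, Y ω), Z ω)) ((a, b), c) :=
    prob_marg μ (fun ω => (X ω, Y ω)) Z (fun ω => Finset.mem_univ _) (a, b)
  rw [h0]
  refine Finset.sum_congr rfl fun c _ => ?_
  have h1 : prob μ (fun ω => ((X ω, Y ω), Z ω)) ((a, b), c)
      = prob μ (fun ω => (X ω, Y ω, Z ω)) (a, b, c) := by
    exact prob_comp_inj (g := fun t : A × B × C => ((t.1, t.2.1), t.2.2))
      (Equiv.injective ⟨fun t : A × B × C => ((t.1, t.2.1), t.2.2),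
        fun s => (s.1.1, s.1.2, s.2), fun _ => rfl, fun _ => rfl⟩)
      μ (fun ω => (X ω, Y ω, Z ω)) (a, b, c)
  exact h1.symm

lemma prob_proj12 (μ : A × B × C → ℝ) (a : A) (b : B) :
    prob μ (fun w => (w.1, w.2.1)) (a, b) = ∑ c, μ (a, b, c) := by
  have h := sum_pushf_last μ (fun w : A × B × C => w.1) (fun w => w.2.1) (fun w => w.2.2) a b
  rw [← h]
  refine Finset.sum_congr rfl fun c _ => ?_
  exact prob_id μ (a, b, c)

end Helpers2

section Helpers3
variable {Ω₁ Ω₂ : Type*} [Fintype Ω₁] [Fintype Ω₂]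

lemma pushf_fst {m₁ : Ω₁ → ℝ} {m₂ : Ω₂ → ℝ} (h₂ : IsPMF m₂) :
    pushf (fun ω : Ω₁ × Ω₂ => m₁ ω.1 * m₂ ω.2) Prod.fst = m₁ := by
  classical
  funext ω₁
  simp only [pushf]
  rw [Fintype.sum_prod_type]
  have key : ∀ u : Ω₁, (∑ v : Ω₂, if (u, v).1 = ω₁ then m₁ u * m₂ v else 0)
      = if u = ω₁ then m₁ u else 0 := by
    intro u
    by_cases h : u = ω₁
    · simp only [h, if_true]
      rw [← Finset.mul_sum, h₂.2, mul_one]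
    · simp [h]
  rw [Finset.sum_congr rfl fun u _ => key u]
  simp

lemma pushf_snd {m₁ : Ω₁ → ℝ} {m₂ : Ω₂ → ℝ} (h₁ : IsPMF m₁) :
    pushf (fun ω : Ω₁ × Ω₂ => m₁ ω.1 * m₂ ω.2) Prod.snd = m₂ := by
  classical
  funext ω₂
  simp only [pushf]
  rw [Fintype.sum_prod_type]
  have key : ∀ u : Ω₁, (∑ v : Ω₂, if (u, v).2 = ω₂ then m₁ u * m₂ v else 0)
      = m₁ u * m₂ ω₂ := by
    intro u
    rw [Finset.sum_eq_single_of_mem ω₂ (Finset.mem_univ _) (fun x _ hx => if_neg hx)]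
    exact if_pos rfl
  rw [Finset.sum_congr rfl fun u _ => key u, ← Finset.sum_mul, h₁.2, one_mul]

end Helpers3

end Paper

namespace Paper

open Pointwise in
/-- if `(X₁,Y₁) ⟂ (X₂,Y₂)`, the tension region tensorizes:
`𝔗(X₁X₂;Y₁Y₂) = 𝔗(X₁;Y₁) + 𝔗(X₂;Y₂)` (Minkowski sum). -/
theorem rtens_tensorizes {𝒳₁ 𝒴₁ 𝒳₂ 𝒴₂ : Type}
    [Fintype 𝒳₁] [Fintype 𝒴₁] [Fintype 𝒳₂] [Fintype 𝒴₂]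
    (μ₁ : 𝒳₁ × 𝒴₁ → ℝ) (μ₂ : 𝒳₂ × 𝒴₂ → ℝ)
    (h₁ : IsPMF μ₁) (h₂ : IsPMF μ₂) :
    Rtens (fun p : (𝒳₁ × 𝒳₂) × (𝒴₁ × 𝒴₂) => μ₁ (p.1.1, p.2.1) * μ₂ (p.1.2, p.2.2))
      = Rtens μ₁ + Rtens μ₂ := by
  ext r
  constructor
  · -- ⊆ : hard direction
    intro hr
    obtain ⟨ht1, ht2, ht3, n, ν, hν, hmarg, hI1, hI2, hI3⟩ := hr
    -- push ν down to the (X,Y) marginal, which is the product μ₁ ⊗ μ₂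
    set mμ : (𝒳₁ × 𝒴₁) × (𝒳₂ × 𝒴₂) → ℝ := fun ω => μ₁ ω.1 * μ₂ ω.2 with hmμ
    set σ : ((𝒳₁ × 𝒴₁) × (𝒳₂ × 𝒴₂)) ≃ ((𝒳₁ × 𝒳₂) × (𝒴₁ × 𝒴₂)) :=
      ⟨fun ω => ((ω.1.1, ω.2.1), (ω.1.2, ω.2.2)),
       fun p => ((p.1.1, p.2.1), (p.1.2, p.2.2)),
       fun _ => rfl, fun _ => rfl⟩ with hσdef
    have hσ : (fun p : (𝒳₁ × 𝒳₂) × (𝒴₁ × 𝒴₂) => μ₁ (p.1.1, p.2.1) * μ₂ (p.1.2, p.2.2))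
        = pushf mμ σ := by
      rw [pushf_equiv]
      rfl
    have hpush : pushf ν (fun w => (w.1, w.2.1))
        = (fun p : (𝒳₁ × 𝒳₂) × (𝒴₁ × 𝒴₂) => μ₁ (p.1.1, p.2.1) * μ₂ (p.1.2, p.2.2)) := by
      funext p
      have h1 : pushf ν (fun w => (w.1, w.2.1)) p = prob ν (fun w => (w.1, w.2.1)) p := rfl
      have h2 : prob ν (fun w => (w.1, w.2.1)) (p.1, p.2) = ∑ c, ν (p.1, p.2, c) :=
        prob_proj12 ν p.1 p.2
      rw [h1, show prob ν (fun w => (w.1, w.2.1)) p = ∑ c, ν (p.1, p.2, c) from h2]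
      exact hmarg p.1 p.2
    -- independence facts
    have fact_a : condMutInfo ν (fun w => w.2.1.2) (fun w => w.1.1) (fun w => w.1.2) = 0 := by
      have s1 : condMutInfo ν (fun w => w.2.1.2) (fun w => w.1.1) (fun w => w.1.2)
          = condMutInfo (pushf ν (fun w => (w.1, w.2.1)))
              (fun p => p.2.2) (fun p => p.1.1) (fun p => p.1.2) := by
        exact (condMutInfo_pushf ν (fun w => (w.1, w.2.1))
          (fun p => p.2.2) (fun p => p.1.1) (fun p => p.1.2)).symm
      rw [s1, hpush, hσ, condMutInfo_pushf]
      exact condMutInfo_prod_zero₂ h₁ h₂ (fun z => z.2) (fun z => z.1) (fun z => z.1)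
    have fact_b : condMutInfo ν (fun w => w.2.1.1) (fun w => (w.1.2, w.2.1.2)) (fun w => w.1.1) = 0 := by
      have s1 : condMutInfo ν (fun w => w.2.1.1) (fun w => (w.1.2, w.2.1.2)) (fun w => w.1.1)
          = condMutInfo (pushf ν (fun w => (w.1, w.2.1)))
              (fun p => p.2.1) (fun p => (p.1.2, p.2.2)) (fun p => p.1.1) := by
        exact (condMutInfo_pushf ν (fun w => (w.1, w.2.1))
          (fun p => p.2.1) (fun p => (p.1.2, p.2.2)) (fun p => p.1.1)).symm
      rw [s1, hpush, hσ, condMutInfo_pushf]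
      exact condMutInfo_prod_zero₁ h₁ h₂ (fun z => z.2) (fun z => z) (fun z => z.1)
    have fact_c : condMutInfo ν (fun w => w.1.2) (fun w => w.2.1.1) (fun w => w.2.1.2) = 0 := by
      have s1 : condMutInfo ν (fun w => w.1.2) (fun w => w.2.1.1) (fun w => w.2.1.2)
          = condMutInfo (pushf ν (fun w => (w.1, w.2.1)))
              (fun p => p.1.2) (fun p => p.2.1) (fun p => p.2.2) := by
        exact (condMutInfo_pushf ν (fun w => (w.1, w.2.1))
          (fun p => p.1.2) (fun p => p.2.1) (fun p => p.2.2)).symm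
      rw [s1, hpush, hσ, condMutInfo_pushf]
      exact condMutInfo_prod_zero₂ h₁ h₂ (fun z => z.1) (fun z => z.2) (fun z => z.2)
    have fact_d : condMutInfo ν (fun w => w.1.1) (fun w => (w.1.2, w.2.1.2)) (fun w => w.2.1.1) = 0 := by
      have s1 : condMutInfo ν (fun w => w.1.1) (fun w => (w.1.2, w.2.1.2)) (fun w => w.2.1.1)
          = condMutInfo (pushf ν (fun w => (w.1, w.2.1)))
              (fun p => p.1.1) (fun p => (p.1.2, p.2.2)) (fun p => p.2.1) := by
        exact (condMutInfo_pushf ν (fun w => (w.1, w.2.1))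
          (fun p => p.1.1) (fun p => (p.1.2, p.2.2)) (fun p => p.2.1)).symm
      rw [s1, hpush, hσ, condMutInfo_pushf]
      exact condMutInfo_prod_zero₁ h₁ h₂ (fun z => z.1) (fun z => z) (fun z => z.2)
    -- the six single-letter quantities
    set a₁ := condMutInfo ν (fun w => w.2.1.1) (fun w => (w.2.2, w.1.2, w.2.1.2)) (fun w => w.1.1) with ha₁
    set a₂ := condMutInfo ν (fun w => w.1.1) (fun w => (w.2.2, w.1.2, w.2.1.2)) (fun w => w.2.1.1) with ha₂
    set a₃ := condMutInfo ν (fun w => w.1.1) (fun w => w.2.1.1) (fun w => (w.2.2, w.1.2, w.2.1.2)) with ha₃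
    set b₁ := condMutInfo ν (fun w => w.2.1.2) (fun w => w.2.2) (fun w => w.1.2) with hb₁
    set b₂ := condMutInfo ν (fun w => w.1.2) (fun w => w.2.2) (fun w => w.2.1.2) with hb₂
    set b₃ := condMutInfo ν (fun w => w.1.2) (fun w => w.2.1.2) (fun w => w.2.2) with hb₃
    have ha₁0 : 0 ≤ a₁ := condMutInfo_nonneg hν _ _ _
    have ha₂0 : 0 ≤ a₂ := condMutInfo_nonneg hν _ _ _
    have ha₃0 : 0 ≤ a₃ := condMutInfo_nonneg hν _ _ _
    have hb₁0 : 0 ≤ b₁ := condMutInfo_nonneg hν _ _ _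
    have hb₂0 : 0 ≤ b₂ := condMutInfo_nonneg hν _ _ _
    have hb₃0 : 0 ≤ b₃ := condMutInfo_nonneg hν _ _ _
    -- ===== Inequality (I): a₁ + b₁ ≤ r.1 =====
    have c1 : condMutInfo ν (fun w => w.2.1) (fun w => w.2.2) (fun w => w.1)
        = condMutInfo ν (fun w => w.2.2) (fun w => w.2.1) (fun w => w.1) := by
      exact condMutInfo_comm ν (fun w => w.2.1) (fun w => w.2.2) (fun w => w.1)
    have c2 : condMutInfo ν (fun w => w.2.2) (fun w => w.2.1) (fun w => w.1)
        = condMutInfo ν (fun w => w.2.2) (fun w => (w.2.1.2, w.2.1.1)) (fun w => w.1) := by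
      exact condMutInfo_relabel Function.injective_id
        (Equiv.injective ⟨fun p : 𝒴₂ × 𝒴₁ => (p.2, p.1), fun q => (q.2, q.1),
          fun _ => rfl, fun _ => rfl⟩) Function.injective_id
        ν (fun w => w.2.2) (fun w => (w.2.1.2, w.2.1.1)) (fun w => w.1)
    have c3 : condMutInfo ν (fun w => w.2.2) (fun w => (w.2.1.2, w.2.1.1)) (fun w => w.1)
        = condMutInfo ν (fun w => w.2.2) (fun w => w.2.1.2) (fun w => w.1)
          + condMutInfo ν (fun w => w.2.2) (fun w => w.2.1.1) (fun w => (w.2.1.2, w.1)) := by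
      exact condMutInfo_chain ν (fun w => w.2.2) (fun w => w.2.1.2) (fun w => w.2.1.1) (fun w => w.1)
    -- lower-bound the first summand by b₁
    have d1 : condMutInfo ν (fun w => w.2.1.2) (fun w => (w.1.1, w.2.2)) (fun w => w.1.2)
        = condMutInfo ν (fun w => w.2.1.2) (fun w => w.1.1) (fun w => w.1.2)
          + condMutInfo ν (fun w => w.2.1.2) (fun w => w.2.2) (fun w => (w.1.1, w.1.2)) := by
      exact condMutInfo_chain ν (fun w => w.2.1.2) (fun w => w.1.1) (fun w => w.2.2) (fun w => w.1.2)
    have d2 : condMutInfo ν (fun w => w.2.1.2) (fun w => (w.1.1, w.2.2)) (fun w => w.1.2)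
        = condMutInfo ν (fun w => w.2.1.2) (fun w => (w.2.2, w.1.1)) (fun w => w.1.2) := by
      exact condMutInfo_relabel Function.injective_id
        (Equiv.injective ⟨fun p : Fin n × 𝒳₁ => (p.2, p.1), fun q => (q.2, q.1),
          fun _ => rfl, fun _ => rfl⟩) Function.injective_id
        ν (fun w => w.2.1.2) (fun w => (w.2.2, w.1.1)) (fun w => w.1.2)
    have d3 : condMutInfo ν (fun w => w.2.1.2) (fun w => (w.2.2, w.1.1)) (fun w => w.1.2)
        = condMutInfo ν (fun w => w.2.1.2) (fun w => w.2.2) (fun w => w.1.2)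
          + condMutInfo ν (fun w => w.2.1.2) (fun w => w.1.1) (fun w => (w.2.2, w.1.2)) := by
      exact condMutInfo_chain ν (fun w => w.2.1.2) (fun w => w.2.2) (fun w => w.1.1) (fun w => w.1.2)
    have dn : 0 ≤ condMutInfo ν (fun w => w.2.1.2) (fun w => w.1.1) (fun w => (w.2.2, w.1.2)) :=
      condMutInfo_nonneg hν _ _ _
    have dcomm : condMutInfo ν (fun w => w.2.2) (fun w => w.2.1.2) (fun w => w.1)
        = condMutInfo ν (fun w => w.2.1.2) (fun w => w.2.2) (fun w => w.1) := by
      exact condMutInfo_comm ν (fun w => w.2.2) (fun w => w.2.1.2) (fun w => w.1)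
    have dlink : condMutInfo ν (fun w => w.2.1.2) (fun w => w.2.2) (fun w => (w.1.1, w.1.2))
        = condMutInfo ν (fun w => w.2.1.2) (fun w => w.2.2) (fun w => w.1) := rfl
    have hge1 : b₁ ≤ condMutInfo ν (fun w => w.2.2) (fun w => w.2.1.2) (fun w => w.1) := by
      rw [dcomm, ← dlink]
      linarith [d1, d2, d3, fact_a, dn]
    -- identify the second summand with a₁
    have e1 : condMutInfo ν (fun w => w.2.1.1) (fun w => ((w.1.2, w.2.1.2), w.2.2)) (fun w => w.1.1)
        = condMutInfo ν (fun w => w.2.1.1) (fun w => (w.1.2, w.2.1.2)) (fun w => w.1.1)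
          + condMutInfo ν (fun w => w.2.1.1) (fun w => w.2.2) (fun w => ((w.1.2, w.2.1.2), w.1.1)) := by
      exact condMutInfo_chain ν (fun w => w.2.1.1) (fun w => (w.1.2, w.2.1.2)) (fun w => w.2.2) (fun w => w.1.1)
    have e2 : a₁ = condMutInfo ν (fun w => w.2.1.1) (fun w => ((w.1.2, w.2.1.2), w.2.2)) (fun w => w.1.1) := by
      exact condMutInfo_relabel Function.injective_id
        (Equiv.injective ⟨fun p : (𝒳₂ × 𝒴₂) × Fin n => (p.2, p.1.1, p.1.2),
          fun q => ((q.2.1, q.2.2), q.1), fun _ => rfl, fun _ => rfl⟩) Function.injective_id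
        ν (fun w => w.2.1.1) (fun w => ((w.1.2, w.2.1.2), w.2.2)) (fun w => w.1.1)
    have e4a : condMutInfo ν (fun w => w.2.1.1) (fun w => w.2.2) (fun w => ((w.1.2, w.2.1.2), w.1.1))
        = condMutInfo ν (fun w => w.2.2) (fun w => w.2.1.1) (fun w => ((w.1.2, w.2.1.2), w.1.1)) := by
      exact condMutInfo_comm ν (fun w => w.2.1.1) (fun w => w.2.2) (fun w => ((w.1.2, w.2.1.2), w.1.1))
    have e4b : condMutInfo ν (fun w => w.2.2) (fun w => w.2.1.1) (fun w => (w.2.1.2, w.1))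
        = condMutInfo ν (fun w => w.2.2) (fun w => w.2.1.1) (fun w => ((w.1.2, w.2.1.2), w.1.1)) := by
      exact condMutInfo_relabel Function.injective_id Function.injective_id
        (Equiv.injective ⟨fun p : (𝒳₂ × 𝒴₂) × 𝒳₁ => (p.1.2, (p.2, p.1.1)),
          fun q => ((q.2.2, q.1), q.2.1), fun _ => rfl, fun _ => rfl⟩)
        ν (fun w => w.2.2) (fun w => w.2.1.1) (fun w => ((w.1.2, w.2.1.2), w.1.1))
    have heq2 : condMutInfo ν (fun w => w.2.2) (fun w => w.2.1.1) (fun w => (w.2.1.2, w.1)) = a₁ := by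
      rw [e4b, e2, ← e4a]
      linarith [e1, fact_b]
    have ineqI : a₁ + b₁ ≤ r.1 := by
      have := hI1
      rw [c1, c2, c3] at this
      linarith [hge1, heq2, this]
    -- ===== Inequality (II): a₂ + b₂ ≤ r.2.1 =====
    have c1' : condMutInfo ν (fun w => w.1) (fun w => w.2.2) (fun w => w.2.1)
        = condMutInfo ν (fun w => w.2.2) (fun w => w.1) (fun w => w.2.1) := by
      exact condMutInfo_comm ν (fun w => w.1) (fun w => w.2.2) (fun w => w.2.1)
    have c2' : condMutInfo ν (fun w => w.2.2) (fun w => w.1) (fun w => w.2.1)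
        = condMutInfo ν (fun w => w.2.2) (fun w => (w.1.2, w.1.1)) (fun w => w.2.1) := by
      exact condMutInfo_relabel Function.injective_id
        (Equiv.injective ⟨fun p : 𝒳₂ × 𝒳₁ => (p.2, p.1), fun q => (q.2, q.1),
          fun _ => rfl, fun _ => rfl⟩) Function.injective_id
        ν (fun w => w.2.2) (fun w => (w.1.2, w.1.1)) (fun w => w.2.1)
    have c3' : condMutInfo ν (fun w => w.2.2) (fun w => (w.1.2, w.1.1)) (fun w => w.2.1)
        = condMutInfo ν (fun w => w.2.2) (fun w => w.1.2) (fun w => w.2.1)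
          + condMutInfo ν (fun w => w.2.2) (fun w => w.1.1) (fun w => (w.1.2, w.2.1)) := by
      exact condMutInfo_chain ν (fun w => w.2.2) (fun w => w.1.2) (fun w => w.1.1) (fun w => w.2.1)
    have d1' : condMutInfo ν (fun w => w.1.2) (fun w => (w.2.1.1, w.2.2)) (fun w => w.2.1.2)
        = condMutInfo ν (fun w => w.1.2) (fun w => w.2.1.1) (fun w => w.2.1.2)
          + condMutInfo ν (fun w => w.1.2) (fun w => w.2.2) (fun w => (w.2.1.1, w.2.1.2)) := by
      exact condMutInfo_chain ν (fun w => w.1.2) (fun w => w.2.1.1) (fun w => w.2.2) (fun w => w.2.1.2)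
    have d2' : condMutInfo ν (fun w => w.1.2) (fun w => (w.2.1.1, w.2.2)) (fun w => w.2.1.2)
        = condMutInfo ν (fun w => w.1.2) (fun w => (w.2.2, w.2.1.1)) (fun w => w.2.1.2) := by
      exact condMutInfo_relabel Function.injective_id
        (Equiv.injective ⟨fun p : Fin n × 𝒴₁ => (p.2, p.1), fun q => (q.2, q.1),
          fun _ => rfl, fun _ => rfl⟩) Function.injective_id
        ν (fun w => w.1.2) (fun w => (w.2.2, w.2.1.1)) (fun w => w.2.1.2)
    have d3' : condMutInfo ν (fun w => w.1.2) (fun w => (w.2.2, w.2.1.1)) (fun w => w.2.1.2)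
        = condMutInfo ν (fun w => w.1.2) (fun w => w.2.2) (fun w => w.2.1.2)
          + condMutInfo ν (fun w => w.1.2) (fun w => w.2.1.1) (fun w => (w.2.2, w.2.1.2)) := by
      exact condMutInfo_chain ν (fun w => w.1.2) (fun w => w.2.2) (fun w => w.2.1.1) (fun w => w.2.1.2)
    have dn' : 0 ≤ condMutInfo ν (fun w => w.1.2) (fun w => w.2.1.1) (fun w => (w.2.2, w.2.1.2)) :=
      condMutInfo_nonneg hν _ _ _
    have dcomm' : condMutInfo ν (fun w => w.2.2) (fun w => w.1.2) (fun w => w.2.1)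
        = condMutInfo ν (fun w => w.1.2) (fun w => w.2.2) (fun w => w.2.1) := by
      exact condMutInfo_comm ν (fun w => w.2.2) (fun w => w.1.2) (fun w => w.2.1)
    have dlink' : condMutInfo ν (fun w => w.1.2) (fun w => w.2.2) (fun w => (w.2.1.1, w.2.1.2))
        = condMutInfo ν (fun w => w.1.2) (fun w => w.2.2) (fun w => w.2.1) := rfl
    have hge1' : b₂ ≤ condMutInfo ν (fun w => w.2.2) (fun w => w.1.2) (fun w => w.2.1) := by
      rw [dcomm', ← dlink']
      linarith [d1', d2', d3', fact_c, dn']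
    have e1' : condMutInfo ν (fun w => w.1.1) (fun w => ((w.1.2, w.2.1.2), w.2.2)) (fun w => w.2.1.1)
        = condMutInfo ν (fun w => w.1.1) (fun w => (w.1.2, w.2.1.2)) (fun w => w.2.1.1)
          + condMutInfo ν (fun w => w.1.1) (fun w => w.2.2) (fun w => ((w.1.2, w.2.1.2), w.2.1.1)) := by
      exact condMutInfo_chain ν (fun w => w.1.1) (fun w => (w.1.2, w.2.1.2)) (fun w => w.2.2) (fun w => w.2.1.1)
    have e2' : a₂ = condMutInfo ν (fun w => w.1.1) (fun w => ((w.1.2, w.2.1.2), w.2.2)) (fun w => w.2.1.1) := by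
      exact condMutInfo_relabel Function.injective_id
        (Equiv.injective ⟨fun p : (𝒳₂ × 𝒴₂) × Fin n => (p.2, p.1.1, p.1.2),
          fun q => ((q.2.1, q.2.2), q.1), fun _ => rfl, fun _ => rfl⟩) Function.injective_id
        ν (fun w => w.1.1) (fun w => ((w.1.2, w.2.1.2), w.2.2)) (fun w => w.2.1.1)
    have e4a' : condMutInfo ν (fun w => w.1.1) (fun w => w.2.2) (fun w => ((w.1.2, w.2.1.2), w.2.1.1))
        = condMutInfo ν (fun w => w.2.2) (fun w => w.1.1) (fun w => ((w.1.2, w.2.1.2), w.2.1.1)) := by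
      exact condMutInfo_comm ν (fun w => w.1.1) (fun w => w.2.2) (fun w => ((w.1.2, w.2.1.2), w.2.1.1))
    have e4b' : condMutInfo ν (fun w => w.2.2) (fun w => w.1.1) (fun w => (w.1.2, w.2.1))
        = condMutInfo ν (fun w => w.2.2) (fun w => w.1.1) (fun w => ((w.1.2, w.2.1.2), w.2.1.1)) := by
      exact condMutInfo_relabel Function.injective_id Function.injective_id
        (Equiv.injective ⟨fun p : (𝒳₂ × 𝒴₂) × 𝒴₁ => (p.1.1, (p.2, p.1.2)),
          fun q => ((q.1, q.2.2), q.2.1), fun _ => rfl, fun _ => rfl⟩)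
        ν (fun w => w.2.2) (fun w => w.1.1) (fun w => ((w.1.2, w.2.1.2), w.2.1.1))
    have heq2' : condMutInfo ν (fun w => w.2.2) (fun w => w.1.1) (fun w => (w.1.2, w.2.1)) = a₂ := by
      rw [e4b', e2', ← e4a']
      linarith [e1', fact_d]
    have ineqII : a₂ + b₂ ≤ r.2.1 := by
      have := hI2
      rw [c1', c2', c3'] at this
      linarith [hge1', heq2', this]
    -- ===== Inequality (III): a₃ + b₃ ≤ r.2.2 =====
    have f1 : condMutInfo ν (fun w => w.1) (fun w => w.2.1) (fun w => w.2.2)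
        = condMutInfo ν (fun w => w.2.1) (fun w => w.1) (fun w => w.2.2) := by
      exact condMutInfo_comm ν (fun w => w.1) (fun w => w.2.1) (fun w => w.2.2)
    have f2 : condMutInfo ν (fun w => w.2.1) (fun w => w.1) (fun w => w.2.2)
        = condMutInfo ν (fun w => w.2.1) (fun w => (w.1.2, w.1.1)) (fun w => w.2.2) := by
      exact condMutInfo_relabel Function.injective_id
        (Equiv.injective ⟨fun p : 𝒳₂ × 𝒳₁ => (p.2, p.1), fun q => (q.2, q.1),
          fun _ => rfl, fun _ => rfl⟩) Function.injective_id
        ν (fun w => w.2.1) (fun w => (w.1.2, w.1.1)) (fun w => w.2.2)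
    have f3 : condMutInfo ν (fun w => w.2.1) (fun w => (w.1.2, w.1.1)) (fun w => w.2.2)
        = condMutInfo ν (fun w => w.2.1) (fun w => w.1.2) (fun w => w.2.2)
          + condMutInfo ν (fun w => w.2.1) (fun w => w.1.1) (fun w => (w.1.2, w.2.2)) := by
      exact condMutInfo_chain ν (fun w => w.2.1) (fun w => w.1.2) (fun w => w.1.1) (fun w => w.2.2)
    -- first summand ≥ b₃
    have g1 : condMutInfo ν (fun w => w.2.1) (fun w => w.1.2) (fun w => w.2.2)
        = condMutInfo ν (fun w => w.1.2) (fun w => w.2.1) (fun w => w.2.2) := by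
      exact condMutInfo_comm ν (fun w => w.2.1) (fun w => w.1.2) (fun w => w.2.2)
    have g2 : condMutInfo ν (fun w => w.1.2) (fun w => w.2.1) (fun w => w.2.2)
        = condMutInfo ν (fun w => w.1.2) (fun w => (w.2.1.2, w.2.1.1)) (fun w => w.2.2) := by
      exact condMutInfo_relabel Function.injective_id
        (Equiv.injective ⟨fun p : 𝒴₂ × 𝒴₁ => (p.2, p.1), fun q => (q.2, q.1),
          fun _ => rfl, fun _ => rfl⟩) Function.injective_id
        ν (fun w => w.1.2) (fun w => (w.2.1.2, w.2.1.1)) (fun w => w.2.2)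
    have g3 : condMutInfo ν (fun w => w.1.2) (fun w => (w.2.1.2, w.2.1.1)) (fun w => w.2.2)
        = condMutInfo ν (fun w => w.1.2) (fun w => w.2.1.2) (fun w => w.2.2)
          + condMutInfo ν (fun w => w.1.2) (fun w => w.2.1.1) (fun w => (w.2.1.2, w.2.2)) := by
      exact condMutInfo_chain ν (fun w => w.1.2) (fun w => w.2.1.2) (fun w => w.2.1.1) (fun w => w.2.2)
    have g4 : 0 ≤ condMutInfo ν (fun w => w.1.2) (fun w => w.2.1.1) (fun w => (w.2.1.2, w.2.2)) :=
      condMutInfo_nonneg hν _ _ _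
    -- second summand ≥ a₃
    have g5 : condMutInfo ν (fun w => w.2.1) (fun w => w.1.1) (fun w => (w.1.2, w.2.2))
        = condMutInfo ν (fun w => w.1.1) (fun w => w.2.1) (fun w => (w.1.2, w.2.2)) := by
      exact condMutInfo_comm ν (fun w => w.2.1) (fun w => w.1.1) (fun w => (w.1.2, w.2.2))
    have g6 : condMutInfo ν (fun w => w.1.1) (fun w => w.2.1) (fun w => (w.1.2, w.2.2))
        = condMutInfo ν (fun w => w.1.1) (fun w => (w.2.1.2, w.2.1.1)) (fun w => (w.1.2, w.2.2)) := by
      exact condMutInfo_relabel Function.injective_id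
        (Equiv.injective ⟨fun p : 𝒴₂ × 𝒴₁ => (p.2, p.1), fun q => (q.2, q.1),
          fun _ => rfl, fun _ => rfl⟩) Function.injective_id
        ν (fun w => w.1.1) (fun w => (w.2.1.2, w.2.1.1)) (fun w => (w.1.2, w.2.2))
    have g7 : condMutInfo ν (fun w => w.1.1) (fun w => (w.2.1.2, w.2.1.1)) (fun w => (w.1.2, w.2.2))
        = condMutInfo ν (fun w => w.1.1) (fun w => w.2.1.2) (fun w => (w.1.2, w.2.2))
          + condMutInfo ν (fun w => w.1.1) (fun w => w.2.1.1) (fun w => (w.2.1.2, (w.1.2, w.2.2))) := by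
      exact condMutInfo_chain ν (fun w => w.1.1) (fun w => w.2.1.2) (fun w => w.2.1.1) (fun w => (w.1.2, w.2.2))
    have g8 : 0 ≤ condMutInfo ν (fun w => w.1.1) (fun w => w.2.1.2) (fun w => (w.1.2, w.2.2)) :=
      condMutInfo_nonneg hν _ _ _
    have glink : condMutInfo ν (fun w => w.1.1) (fun w => w.2.1.1) (fun w => (w.2.1.2, (w.1.2, w.2.2)))
        = a₃ := by
      exact condMutInfo_relabel Function.injective_id Function.injective_id
        (Equiv.injective ⟨fun p : Fin n × 𝒳₂ × 𝒴₂ => (p.2.2, (p.2.1, p.1)),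
          fun q => (q.2.2, q.2.1, q.1), fun _ => rfl, fun _ => rfl⟩)
        ν (fun w => w.1.1) (fun w => w.2.1.1) (fun w => (w.2.2, w.1.2, w.2.1.2))
    have ineqIII : a₃ + b₃ ≤ r.2.2 := by
      have := hI3
      rw [f1, f2, f3] at this
      linarith [g1, g2, g3, g4, g5, g6, g7, g8, glink, this]
    -- ===== build the two witnesses =====
    refine Set.mem_add.2 ⟨(a₁, a₂, a₃), ?_, (r.1 - a₁, r.2.1 - a₂, r.2.2 - a₃), ?_, ?_⟩
    · -- (a₁, a₂, a₃) ∈ Rtens μ₁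
      refine ⟨ha₁0, ha₂0, ha₃0, Fintype.card (Fin n × 𝒳₂ × 𝒴₂),
        pushf ν (fun w => (w.1.1, w.2.1.1,
          (Fintype.equivFin (Fin n × 𝒳₂ × 𝒴₂)) (w.2.2, w.1.2, w.2.1.2))),
        pushf_isPMF hν _, ?_, ?_, ?_, ?_⟩
      · -- marginal
        intro a b
        have h0 : (∑ q, pushf ν (fun w => (w.1.1, w.2.1.1,
              (Fintype.equivFin (Fin n × 𝒳₂ × 𝒴₂)) (w.2.2, w.1.2, w.2.1.2))) (a, b, q))
            = prob ν (fun w => (w.1.1, w.2.1.1)) (a, b) :=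
          sum_pushf_last ν (fun w => w.1.1) (fun w => w.2.1.1)
            (fun w => (Fintype.equivFin (Fin n × 𝒳₂ × 𝒴₂)) (w.2.2, w.1.2, w.2.1.2)) a b
        rw [h0]
        have r1 : prob ν (fun w => (w.1.1, w.2.1.1)) (a, b)
            = prob (pushf ν (fun w => (w.1, w.2.1))) (fun p => (p.1.1, p.2.1)) (a, b) :=
          (prob_pushf ν (fun w => (w.1, w.2.1)) (fun p => (p.1.1, p.2.1)) (a, b)).symm
        rw [r1, hpush, hσ, prob_pushf]
        have r2 : prob mμ (fun ω : (𝒳₁ × 𝒴₁) × (𝒳₂ × 𝒴₂) => ω.1) (a, b) = μ₁ (a, b) := by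
          have hf : pushf mμ Prod.fst = μ₁ := pushf_fst h₂
          calc prob mμ (fun ω : (𝒳₁ × 𝒴₁) × (𝒳₂ × 𝒴₂) => ω.1) (a, b)
              = pushf mμ Prod.fst (a, b) := rfl
            _ = μ₁ (a, b) := by rw [hf]
        exact r2
      · -- CMI 1 ≤ a₁
        have q1 : condMutInfo (pushf ν (fun w => (w.1.1, w.2.1.1,
              (Fintype.equivFin (Fin n × 𝒳₂ × 𝒴₂)) (w.2.2, w.1.2, w.2.1.2))))
              (fun x => x.2.1) (fun x => x.2.2) (fun x => x.1)
            = condMutInfo ν (fun w => w.2.1.1)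
                (fun w => (Fintype.equivFin (Fin n × 𝒳₂ × 𝒴₂)) (w.2.2, w.1.2, w.2.1.2))
                (fun w => w.1.1) := by
          exact condMutInfo_pushf ν (fun w => (w.1.1, w.2.1.1,
            (Fintype.equivFin (Fin n × 𝒳₂ × 𝒴₂)) (w.2.2, w.1.2, w.2.1.2)))
            (fun x => x.2.1) (fun x => x.2.2) (fun x => x.1)
        have q2 : condMutInfo ν (fun w => w.2.1.1)
              (fun w => (Fintype.equivFin (Fin n × 𝒳₂ × 𝒴₂)) (w.2.2, w.1.2, w.2.1.2))
              (fun w => w.1.1) = a₁ := by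
          exact condMutInfo_relabel Function.injective_id
            (Fintype.equivFin (Fin n × 𝒳₂ × 𝒴₂)).injective Function.injective_id
            ν (fun w => w.2.1.1) (fun w => (w.2.2, w.1.2, w.2.1.2)) (fun w => w.1.1)
        rw [q1, q2]
      · -- CMI 2 ≤ a₂
        have q1 : condMutInfo (pushf ν (fun w => (w.1.1, w.2.1.1,
              (Fintype.equivFin (Fin n × 𝒳₂ × 𝒴₂)) (w.2.2, w.1.2, w.2.1.2))))
              (fun x => x.1) (fun x => x.2.2) (fun x => x.2.1)
            = condMutInfo ν (fun w => w.1.1)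
                (fun w => (Fintype.equivFin (Fin n × 𝒳₂ × 𝒴₂)) (w.2.2, w.1.2, w.2.1.2))
                (fun w => w.2.1.1) := by
          exact condMutInfo_pushf ν (fun w => (w.1.1, w.2.1.1,
            (Fintype.equivFin (Fin n × 𝒳₂ × 𝒴₂)) (w.2.2, w.1.2, w.2.1.2)))
            (fun x => x.1) (fun x => x.2.2) (fun x => x.2.1)
        have q2 : condMutInfo ν (fun w => w.1.1)
              (fun w => (Fintype.equivFin (Fin n × 𝒳₂ × 𝒴₂)) (w.2.2, w.1.2, w.2.1.2))
              (fun w => w.2.1.1) = a₂ := by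
          exact condMutInfo_relabel Function.injective_id
            (Fintype.equivFin (Fin n × 𝒳₂ × 𝒴₂)).injective Function.injective_id
            ν (fun w => w.1.1) (fun w => (w.2.2, w.1.2, w.2.1.2)) (fun w => w.2.1.1)
        rw [q1, q2]
      · -- CMI 3 ≤ a₃
        have q1 : condMutInfo (pushf ν (fun w => (w.1.1, w.2.1.1,
              (Fintype.equivFin (Fin n × 𝒳₂ × 𝒴₂)) (w.2.2, w.1.2, w.2.1.2))))
              (fun x => x.1) (fun x => x.2.1) (fun x => x.2.2)
            = condMutInfo ν (fun w => w.1.1) (fun w => w.2.1.1)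
                (fun w => (Fintype.equivFin (Fin n × 𝒳₂ × 𝒴₂)) (w.2.2, w.1.2, w.2.1.2)) := by
          exact condMutInfo_pushf ν (fun w => (w.1.1, w.2.1.1,
            (Fintype.equivFin (Fin n × 𝒳₂ × 𝒴₂)) (w.2.2, w.1.2, w.2.1.2)))
            (fun x => x.1) (fun x => x.2.1) (fun x => x.2.2)
        have q2 : condMutInfo ν (fun w => w.1.1) (fun w => w.2.1.1)
              (fun w => (Fintype.equivFin (Fin n × 𝒳₂ × 𝒴₂)) (w.2.2, w.1.2, w.2.1.2)) = a₃ := by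
          exact condMutInfo_relabel Function.injective_id Function.injective_id
            (Fintype.equivFin (Fin n × 𝒳₂ × 𝒴₂)).injective
            ν (fun w => w.1.1) (fun w => w.2.1.1) (fun w => (w.2.2, w.1.2, w.2.1.2))
        rw [q1, q2]
    · -- (r - a) ∈ Rtens μ₂
      refine ⟨show (0:ℝ) ≤ r.1 - a₁ by linarith, show (0:ℝ) ≤ r.2.1 - a₂ by linarith,
        show (0:ℝ) ≤ r.2.2 - a₃ by linarith, n,
        pushf ν (fun w => (w.1.2, w.2.1.2, w.2.2)), pushf_isPMF hν _, ?_, ?_, ?_, ?_⟩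
      · -- marginal
        intro a b
        have h0 : (∑ q, pushf ν (fun w => (w.1.2, w.2.1.2, w.2.2)) (a, b, q))
            = prob ν (fun w => (w.1.2, w.2.1.2)) (a, b) :=
          sum_pushf_last ν (fun w => w.1.2) (fun w => w.2.1.2) (fun w => w.2.2) a b
        rw [h0]
        have r1 : prob ν (fun w => (w.1.2, w.2.1.2)) (a, b)
            = prob (pushf ν (fun w => (w.1, w.2.1))) (fun p => (p.1.2, p.2.2)) (a, b) :=
          (prob_pushf ν (fun w => (w.1, w.2.1)) (fun p => (p.1.2, p.2.2)) (a, b)).symm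
        rw [r1, hpush, hσ, prob_pushf]
        have r2 : prob mμ (fun ω : (𝒳₁ × 𝒴₁) × (𝒳₂ × 𝒴₂) => ω.2) (a, b) = μ₂ (a, b) := by
          have hf : pushf mμ Prod.snd = μ₂ := pushf_snd h₁
          calc prob mμ (fun ω : (𝒳₁ × 𝒴₁) × (𝒳₂ × 𝒴₂) => ω.2) (a, b)
              = pushf mμ Prod.snd (a, b) := rfl
            _ = μ₂ (a, b) := by rw [hf]
        exact r2
      · -- CMI 1 ≤ r.1 - a₁
        have q1 : condMutInfo (pushf ν (fun w => (w.1.2, w.2.1.2, w.2.2)))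
              (fun x => x.2.1) (fun x => x.2.2) (fun x => x.1) = b₁ := by
          exact condMutInfo_pushf ν (fun w => (w.1.2, w.2.1.2, w.2.2))
            (fun x => x.2.1) (fun x => x.2.2) (fun x => x.1)
        rw [q1]
        show b₁ ≤ r.1 - a₁
        linarith
      · -- CMI 2 ≤ r.2.1 - a₂
        have q1 : condMutInfo (pushf ν (fun w => (w.1.2, w.2.1.2, w.2.2)))
              (fun x => x.1) (fun x => x.2.2) (fun x => x.2.1) = b₂ := by
          exact condMutInfo_pushf ν (fun w => (w.1.2, w.2.1.2, w.2.2))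
            (fun x => x.1) (fun x => x.2.2) (fun x => x.2.1)
        rw [q1]
        show b₂ ≤ r.2.1 - a₂
        linarith
      · -- CMI 3 ≤ r.2.2 - a₃
        have q1 : condMutInfo (pushf ν (fun w => (w.1.2, w.2.1.2, w.2.2)))
              (fun x => x.1) (fun x => x.2.1) (fun x => x.2.2) = b₃ := by
          exact condMutInfo_pushf ν (fun w => (w.1.2, w.2.1.2, w.2.2))
            (fun x => x.1) (fun x => x.2.1) (fun x => x.2.2)
        rw [q1]
        show b₃ ≤ r.2.2 - a₃
        linarith
    · -- the sum is r
      refine Prod.ext ?_ (Prod.ext ?_ ?_)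
      · show a₁ + (r.1 - a₁) = r.1
        ring
      · show a₂ + (r.2.1 - a₂) = r.2.1
        ring
      · show a₃ + (r.2.2 - a₃) = r.2.2
        ring
  · -- ⊇ : easy direction
    intro hr
    rcases Set.mem_add.1 hr with ⟨u, hu, v, hv, rfl⟩
    obtain ⟨hu1, hu2, hu3, n₁, ν₁, hν₁, hm₁, hI11, hI12, hI13⟩ := hu
    obtain ⟨hv1, hv2, hv3, n₂, ν₂, hν₂, hm₂, hI21, hI22, hI23⟩ := hv
    set e := finProdFinEquiv (m := n₁) (n := n₂) with he
    set m : (𝒳₁ × 𝒴₁ × Fin n₁) × (𝒳₂ × 𝒴₂ × Fin n₂) → ℝ := fun ω => ν₁ ω.1 * ν₂ ω.2 with hm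
    have hmPMF : IsPMF m := prod_isPMF hν₁ hν₂
    set τ : ((𝒳₁ × 𝒴₁ × Fin n₁) × (𝒳₂ × 𝒴₂ × Fin n₂))
        ≃ ((𝒳₁ × 𝒳₂) × (𝒴₁ × 𝒴₂) × Fin (n₁ * n₂)) :=
      ⟨fun ω => ((ω.1.1, ω.2.1), (ω.1.2.1, ω.2.2.1), e (ω.1.2.2, ω.2.2.2)),
       fun w => ((w.1.1, w.2.1.1, (e.symm w.2.2).1), (w.1.2, w.2.1.2, (e.symm w.2.2).2)),
       fun ω => by simp,
       fun w => by simp⟩ with hτ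
    refine ⟨?_, ?_, ?_, n₁ * n₂, pushf m τ, pushf_isPMF hmPMF τ, ?_, ?_, ?_, ?_⟩
    · exact add_nonneg hu1 hv1
    · exact add_nonneg hu2 hv2
    · exact add_nonneg hu3 hv3
    · -- marginal
      intro a b
      simp only [pushf_equiv m τ]
      show (∑ q : Fin (n₁ * n₂),
          ν₁ (a.1, b.1, (e.symm q).1) * ν₂ (a.2, b.2, (e.symm q).2))
        = μ₁ (a.1, b.1) * μ₂ (a.2, b.2)
      rw [show (∑ q : Fin (n₁ * n₂),
            ν₁ (a.1, b.1, (e.symm q).1) * ν₂ (a.2, b.2, (e.symm q).2))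
          = ∑ p : Fin n₁ × Fin n₂, ν₁ (a.1, b.1, p.1) * ν₂ (a.2, b.2, p.2) from
        Equiv.sum_comp e.symm (fun p : Fin n₁ × Fin n₂ => ν₁ (a.1, b.1, p.1) * ν₂ (a.2, b.2, p.2))]
      rw [Fintype.sum_prod_type]
      show (∑ x : Fin n₁, ∑ y : Fin n₂, ν₁ (a.1, b.1, x) * ν₂ (a.2, b.2, y))
        = μ₁ (a.1, b.1) * μ₂ (a.2, b.2)
      rw [← Finset.sum_mul_sum]
      rw [hm₁ a.1 b.1, hm₂ a.2 b.2]
    · -- first CMI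
      have s1 : condMutInfo (pushf m τ) (fun w => w.2.1) (fun w => w.2.2) (fun w => w.1)
          = condMutInfo m (fun ω => (ω.1.2.1, ω.2.2.1))
              (fun ω => e (ω.1.2.2, ω.2.2.2)) (fun ω => (ω.1.1, ω.2.1)) := by
        exact condMutInfo_pushf m τ (fun w => w.2.1) (fun w => w.2.2) (fun w => w.1)
      have s2 : condMutInfo m (fun ω => (ω.1.2.1, ω.2.2.1))
            (fun ω => e (ω.1.2.2, ω.2.2.2)) (fun ω => (ω.1.1, ω.2.1))
          = condMutInfo m (fun ω => (ω.1.2.1, ω.2.2.1))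
              (fun ω => (ω.1.2.2, ω.2.2.2)) (fun ω => (ω.1.1, ω.2.1)) := by
        exact condMutInfo_relabel Function.injective_id e.injective Function.injective_id
          m (fun ω => (ω.1.2.1, ω.2.2.1)) (fun ω => (ω.1.2.2, ω.2.2.2)) (fun ω => (ω.1.1, ω.2.1))
      have s3 : condMutInfo m (fun ω => (ω.1.2.1, ω.2.2.1))
            (fun ω => (ω.1.2.2, ω.2.2.2)) (fun ω => (ω.1.1, ω.2.1))
          = condMutInfo ν₁ (fun w => w.2.1) (fun w => w.2.2) (fun w => w.1)
            + condMutInfo ν₂ (fun w => w.2.1) (fun w => w.2.2) (fun w => w.1) := by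
        exact condMutInfo_prod_add hν₁ hν₂ (fun w => w.2.1) (fun w => w.2.2) (fun w => w.1)
          (fun w => w.2.1) (fun w => w.2.2) (fun w => w.1)
      show condMutInfo (pushf m τ) (fun w => w.2.1) (fun w => w.2.2) (fun w => w.1)
        ≤ u.1 + v.1
      rw [s1, s2, s3]
      exact add_le_add hI11 hI21
    · -- second CMI
      have s1 : condMutInfo (pushf m τ) (fun w => w.1) (fun w => w.2.2) (fun w => w.2.1)
          = condMutInfo m (fun ω => (ω.1.1, ω.2.1))
              (fun ω => e (ω.1.2.2, ω.2.2.2)) (fun ω => (ω.1.2.1, ω.2.2.1)) := by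
        exact condMutInfo_pushf m τ (fun w => w.1) (fun w => w.2.2) (fun w => w.2.1)
      have s2 : condMutInfo m (fun ω => (ω.1.1, ω.2.1))
            (fun ω => e (ω.1.2.2, ω.2.2.2)) (fun ω => (ω.1.2.1, ω.2.2.1))
          = condMutInfo m (fun ω => (ω.1.1, ω.2.1))
              (fun ω => (ω.1.2.2, ω.2.2.2)) (fun ω => (ω.1.2.1, ω.2.2.1)) := by
        exact condMutInfo_relabel Function.injective_id e.injective Function.injective_id
          m (fun ω => (ω.1.1, ω.2.1)) (fun ω => (ω.1.2.2, ω.2.2.2)) (fun ω => (ω.1.2.1, ω.2.2.1))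
      have s3 : condMutInfo m (fun ω => (ω.1.1, ω.2.1))
            (fun ω => (ω.1.2.2, ω.2.2.2)) (fun ω => (ω.1.2.1, ω.2.2.1))
          = condMutInfo ν₁ (fun w => w.1) (fun w => w.2.2) (fun w => w.2.1)
            + condMutInfo ν₂ (fun w => w.1) (fun w => w.2.2) (fun w => w.2.1) := by
        exact condMutInfo_prod_add hν₁ hν₂ (fun w => w.1) (fun w => w.2.2) (fun w => w.2.1)
          (fun w => w.1) (fun w => w.2.2) (fun w => w.2.1)
      show condMutInfo (pushf m τ) (fun w => w.1) (fun w => w.2.2) (fun w => w.2.1)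
        ≤ u.2.1 + v.2.1
      rw [s1, s2, s3]
      exact add_le_add hI12 hI22
    · -- third CMI
      have s1 : condMutInfo (pushf m τ) (fun w => w.1) (fun w => w.2.1) (fun w => w.2.2)
          = condMutInfo m (fun ω => (ω.1.1, ω.2.1))
              (fun ω => (ω.1.2.1, ω.2.2.1)) (fun ω => e (ω.1.2.2, ω.2.2.2)) := by
        exact condMutInfo_pushf m τ (fun w => w.1) (fun w => w.2.1) (fun w => w.2.2)
      have s2 : condMutInfo m (fun ω => (ω.1.1, ω.2.1))
            (fun ω => (ω.1.2.1, ω.2.2.1)) (fun ω => e (ω.1.2.2, ω.2.2.2))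
          = condMutInfo m (fun ω => (ω.1.1, ω.2.1))
              (fun ω => (ω.1.2.1, ω.2.2.1)) (fun ω => (ω.1.2.2, ω.2.2.2)) := by
        exact condMutInfo_relabel Function.injective_id Function.injective_id e.injective
          m (fun ω => (ω.1.1, ω.2.1)) (fun ω => (ω.1.2.1, ω.2.2.1)) (fun ω => (ω.1.2.2, ω.2.2.2))
      have s3 : condMutInfo m (fun ω => (ω.1.1, ω.2.1))
            (fun ω => (ω.1.2.1, ω.2.2.1)) (fun ω => (ω.1.2.2, ω.2.2.2))
          = condMutInfo ν₁ (fun w => w.1) (fun w => w.2.1) (fun w => w.2.2)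
            + condMutInfo ν₂ (fun w => w.1) (fun w => w.2.1) (fun w => w.2.2) := by
        exact condMutInfo_prod_add hν₁ hν₂ (fun w => w.1) (fun w => w.2.1) (fun w => w.2.2)
          (fun w => w.1) (fun w => w.2.1) (fun w => w.2.2)
      show condMutInfo (pushf m τ) (fun w => w.1) (fun w => w.2.1) (fun w => w.2.2)
        ≤ u.2.2 + v.2.2
      rw [s1, s2, s3]
      exact add_le_add hI13 hI23

end Paper
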